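/- arXiv:1110.6856 — 4 statements merged into one kernel-verified Lean document; each statement's English description precedes it below -/
import Mathlib

section
/- Let A and B be unital complex Banach algebras, A semisimple, and T : A → B a surjective linear spectral isometry. Then B is semisimple. -/
open Filter Set Metric
open scoped Topology ENNReal NNReal

/-- The Jacobson radical of a ring: the Jacobson radical of the zero two-sided ideal. -/
def jacobsonRadical (A : Type*) [Ring A] : TwoSidedIdeal A :=
  TwoSidedIdeal.jacobson (⊥ : TwoSidedIdeal A)

section RingLemmas

variable {R : Type*} [Ring R]

lemma mem_jacobsonRadical_iff {x : R} :
    x ∈ jacobsonRadical R ↔ ∀ y, ∃ w, w * (y * x + 1) = 1 := by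
  rw [jacobsonRadical, TwoSidedIdeal.mem_jacobson_iff]
  constructor
  · intro h y
    obtain ⟨w, hw⟩ := h y
    rw [TwoSidedIdeal.mem_bot, sub_eq_zero] at hw
    exact ⟨w, by rw [mul_add, mul_one, ← mul_assoc, hw]⟩
  · intro h y
    obtain ⟨w, hw⟩ := h y
    refine ⟨w, ?_⟩
    rw [TwoSidedIdeal.mem_bot, sub_eq_zero, ← hw, mul_add, mul_one, mul_assoc]

lemma isUnit_one_add_of_mem_radical {s : R} (hs : s ∈ jacobsonRadical R) :
    IsUnit (1 + s) := by
  obtain ⟨w, hw⟩ := mem_jacobsonRadical_iff.mp hs 1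
  rw [one_mul] at hw
  -- `w * (s + 1) = 1`, and `w = 1 + (-(w * s))` with `-(w*s)` in the radical
  have hws : -(w * s) ∈ jacobsonRadical R :=
    (jacobsonRadical R).neg_mem ((jacobsonRadical R).mul_mem_left w s hs)
  obtain ⟨w', hw'⟩ := mem_jacobsonRadical_iff.mp hws 1
  rw [one_mul] at hw'
  have hwid : -(w * s) + 1 = w := by
    have : w * s + w = 1 := by rw [← hw, mul_add, mul_one]
    linear_combination (norm := noncomm_ring) -this
  rw [hwid] at hw'
  -- `w' * w = 1` and `w * (s+1) = 1` make `s+1` a unit with inverse `w`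
  have hw'' : w' = s + 1 := by
    calc w' = w' * (w * (s + 1)) := by rw [hw, mul_one]
    _ = w' * w * (s + 1) := by rw [mul_assoc]
    _ = s + 1 := by rw [hw', one_mul]
  refine ⟨⟨1 + s, w, ?_, ?_⟩, rfl⟩
  · rw [add_comm, ← hw'', hw']
  · rw [add_comm]; exact hw

lemma isUnit_add_of_mem_radical {u s : R} (hu : IsUnit u) (hs : s ∈ jacobsonRadical R) :
    IsUnit (u + s) := by
  have h1 : IsUnit (1 + ↑hu.unit⁻¹ * s) :=
    isUnit_one_add_of_mem_radical ((jacobsonRadical R).mul_mem_left _ s hs)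
  have : u + s = u * (1 + ↑hu.unit⁻¹ * s) := by
    rw [mul_add, mul_one, ← mul_assoc, IsUnit.mul_val_inv, one_mul]
  rw [this]
  exact hu.mul h1

end RingLemmas

section AlgLemmas

variable {R : Type*} [Ring R] [Algebra ℂ R]

lemma spectrum_add_of_mem_radical {s : R} (hs : s ∈ jacobsonRadical R) (x : R) :
    spectrum ℂ (s + x) = spectrum ℂ x := by
  have key : ∀ s' ∈ jacobsonRadical R, ∀ x' : R, ∀ μ : ℂ,
      IsUnit (algebraMap ℂ R μ - x') → IsUnit (algebraMap ℂ R μ - (s' + x')) := by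
    intro s' hs' x' μ hu
    have : algebraMap ℂ R μ - (s' + x') = (algebraMap ℂ R μ - x') + (-s') := by abel
    rw [this]
    exact isUnit_add_of_mem_radical hu ((jacobsonRadical R).neg_mem hs')
  ext μ
  simp only [spectrum.mem_iff, not_iff_not]
  constructor
  · intro hu
    have := key (-s) ((jacobsonRadical R).neg_mem hs) (s + x) μ hu
    simpa using this
  · exact key s hs x μ

end AlgLemmas
section SpecLemmas

variable {A : Type*} [NormedRing A] [NormedAlgebra ℂ A]

lemma spectrum_conj (u v a : A) (huv : u * v = 1) (hvu : v * u = 1) :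
    spectrum ℂ (u * a * v) = spectrum ℂ a := by
  have hu : IsUnit u := ⟨⟨u, v, huv, hvu⟩, rfl⟩
  have hv : IsUnit v := ⟨⟨v, u, hvu, huv⟩, rfl⟩
  have key : ∀ b : A, ∀ μ : ℂ, IsUnit (algebraMap ℂ A μ - b) →
      IsUnit (algebraMap ℂ A μ - u * b * v) := by
    intro b μ hb
    have : algebraMap ℂ A μ - u * b * v = u * (algebraMap ℂ A μ - b) * v := by
      rw [mul_sub, sub_mul]
      congr 1
      rw [← Algebra.commutes μ u, mul_assoc, huv, mul_one]
    rw [this]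
    exact (hu.mul hb).mul hv
  ext μ
  simp only [spectrum.mem_iff, not_iff_not]
  constructor
  · intro h
    have := key (u * a * v) μ h
    have h2 : v * (u * a * v) * u = a := by
      calc v * (u * a * v) * u = (v * u) * a * (v * u) := by noncomm_ring
      _ = a := by rw [hvu, one_mul, mul_one]
    have h3 := key (u * a * v) μ h
    -- apply with roles of u,v swapped
    have : algebraMap ℂ A μ - a = v * (algebraMap ℂ A μ - u * a * v) * u := by
      rw [mul_sub, sub_mul]
      congr 1
      · rw [← Algebra.commutes μ v, mul_assoc, hvu, mul_one]
      · exact h2.symm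
    rw [this]
    exact (hv.mul h).mul hu
  · exact key a μ

lemma spectralRadius_conj (u v a : A) (huv : u * v = 1) (hvu : v * u = 1) :
    spectralRadius ℂ (u * a * v) = spectralRadius ℂ a := by
  unfold spectralRadius
  rw [spectrum_conj u v a huv hvu]

lemma spectrum_neg' (a : A) : spectrum ℂ (-a) = (fun μ : ℂ => -μ) '' spectrum ℂ a := by
  ext μ
  simp only [Set.mem_image, spectrum.mem_iff]
  constructor
  · intro h
    refine ⟨-μ, ?_, by simp⟩
    intro hu
    apply h
    have : algebraMap ℂ A μ - (-a) = -(algebraMap ℂ A (-μ) - a) := by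
      rw [map_neg]; abel
    rw [this]
    exact hu.neg
  · rintro ⟨ν, hν, rfl⟩
    intro hu
    apply hν
    have : algebraMap ℂ A ν - a = -(algebraMap ℂ A (-ν) - (-a)) := by
      rw [map_neg]; abel
    rw [this]
    exact hu.neg

lemma spectralRadius_neg (a : A) : spectralRadius ℂ (-a) = spectralRadius ℂ a := by
  unfold spectralRadius
  rw [spectrum_neg' a]
  apply le_antisymm
  · refine iSup₂_le fun μ hμ => ?_
    obtain ⟨ν, hν, rfl⟩ := hμ
    simpa using le_iSup₂ (f := fun k (_ : k ∈ spectrum ℂ a) => (‖k‖₊ : ℝ≥0∞)) ν hν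
  · refine iSup₂_le fun μ hμ => ?_
    have : -μ ∈ (fun μ : ℂ => -μ) '' spectrum ℂ a := ⟨μ, hμ, rfl⟩
    simpa using le_iSup₂ (f := fun k (_ : k ∈ (fun μ : ℂ => -μ) '' spectrum ℂ a) => (‖k‖₊ : ℝ≥0∞))
      (-μ) this

lemma nnnorm_le_spectralRadius_of_mem {a : A} {μ : ℂ} (h : μ ∈ spectrum ℂ a) :
    (‖μ‖₊ : ℝ≥0∞) ≤ spectralRadius ℂ a :=
  le_iSup₂ (f := fun k (_ : k ∈ spectrum ℂ a) => (‖k‖₊ : ℝ≥0∞)) μ h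

end SpecLemmas
section CircleLemma

variable {A : Type*} [NormedRing A] [NormedAlgebra ℂ A] [CompleteSpace A]

lemma spectralRadius_smul_zero {a : A} (h : spectralRadius ℂ a = 0) (μ : ℂ) :
    spectralRadius ℂ (μ • a) = 0 := by
  refine le_antisymm ?_ zero_le
  refine le_trans (spectrum.spectralRadius_le_liminf_pow_nnnorm_pow_one_div ℂ (μ • a)) ?_
  have hev : (fun n : ℕ => (‖(μ • a) ^ n‖₊ : ℝ≥0∞) ^ (1 / n : ℝ))
      =ᶠ[atTop] (fun n : ℕ => (‖μ‖₊ : ℝ≥0∞) * (‖a ^ n‖₊ : ℝ≥0∞) ^ (1 / n : ℝ)) := by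
    filter_upwards [eventually_ge_atTop 1] with n hn
    have hn0 : (n : ℝ) ≠ 0 := by positivity
    rw [smul_pow, nnnorm_smul, ENNReal.coe_mul,
      ENNReal.mul_rpow_of_nonneg _ _ (by positivity : (0:ℝ) ≤ 1 / n)]
    congr 1
    rw [nnnorm_pow, ENNReal.coe_pow, ← ENNReal.rpow_natCast ((‖μ‖₊ : ℝ≥0∞)) n,
      ← ENNReal.rpow_mul, mul_one_div, div_self hn0, ENNReal.rpow_one]
  rw [Filter.liminf_congr hev]
  have h0 := spectrum.pow_nnnorm_pow_one_div_tendsto_nhds_spectralRadius a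
  rw [h] at h0
  have htend : Filter.Tendsto (fun n : ℕ => (‖μ‖₊ : ℝ≥0∞) * (‖a ^ n‖₊ : ℝ≥0∞) ^ (1 / n : ℝ))
      atTop (nhds 0) := by
    simpa using ENNReal.Tendsto.const_mul h0 (Or.inr ENNReal.coe_ne_top)
  rw [htend.liminf_eq]

lemma circle_max_lemma {h : ℂ → A} (hd : Differentiable ℂ h)
    (h0 : ∀ lam : ℂ, ‖lam‖ = 1 → spectralRadius ℂ (h lam) = 0) :
    spectralRadius ℂ (h 0) = 0 := by
  have hdiffpow : ∀ n : ℕ, Differentiable ℂ (fun ν => h ν ^ n) := by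
    intro n
    induction n with
    | zero => simpa using differentiable_const (1 : A)
    | succ n ih => simpa [pow_succ] using ih.fun_mul hd
  have main : ∀ ε : ℝ, 0 < ε → ε < 1 →
      spectralRadius ℂ (h 0) ≤ ENNReal.ofReal (4 * ε) := by
    intro ε hε hε1
    -- Step 1: pointwise good powers on the sphere
    have step1 : ∀ μ : sphere (0:ℂ) 1, ∃ N : ℕ, 0 < N ∧ ‖h μ ^ N‖ < ε ^ N := by
      intro μ
      have hμ : spectralRadius ℂ (h μ) = 0 :=
        h0 μ (by simpa using mem_sphere_zero_iff_norm.mp μ.2)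
      have ht := spectrum.pow_norm_pow_one_div_tendsto_nhds_spectralRadius (h (μ:ℂ))
      rw [hμ] at ht
      have hev : ∀ᶠ n : ℕ in atTop,
          ENNReal.ofReal (‖h (μ:ℂ) ^ n‖ ^ (1/(n:ℝ))) < ENNReal.ofReal ε :=
        ht.eventually_lt_const (by simpa using hε)
      obtain ⟨n, hn1, hn2⟩ := ((eventually_gt_atTop 0).and hev).exists
      refine ⟨n, hn1, ?_⟩
      rw [ENNReal.ofReal_lt_ofReal_iff hε] at hn2
      have hn0 : (n:ℝ) ≠ 0 := by positivity
      calc ‖h (μ:ℂ) ^ n‖ = (‖h (μ:ℂ) ^ n‖ ^ (1/(n:ℝ))) ^ (n:ℕ) := by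
            rw [← Real.rpow_natCast (‖h (μ:ℂ) ^ n‖ ^ (1/(n:ℝ))) n,
              ← Real.rpow_mul (norm_nonneg _), one_div_mul_cancel hn0, Real.rpow_one]
      _ < ε ^ n := pow_lt_pow_left₀ hn2 (Real.rpow_nonneg (norm_nonneg _) _) (by omega)
    classical
    set N : sphere (0:ℂ) 1 → ℕ := fun μ => (step1 μ).choose with hN
    have hNpos : ∀ μ, 0 < N μ := fun μ => (step1 μ).choose_spec.1
    have hNval : ∀ μ : sphere (0:ℂ) 1, ‖h (μ:ℂ) ^ N μ‖ < ε ^ N μ := fun μ => (step1 μ).choose_spec.2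
    set U : sphere (0:ℂ) 1 → Set ℂ := fun μ => {ν | ‖h ν ^ N μ‖ < ε ^ N μ} with hU
    have hUopen : ∀ μ, IsOpen (U μ) := fun μ =>
      isOpen_lt (Continuous.norm ((hdiffpow (N μ)).continuous)) continuous_const
    have hUcover : sphere (0:ℂ) 1 ⊆ ⋃ μ, U μ := fun ν hν =>
      Set.mem_iUnion.mpr ⟨(⟨ν, hν⟩ : sphere (0:ℂ) 1), hNval (⟨ν, hν⟩ : sphere (0:ℂ) 1)⟩
    obtain ⟨t, ht⟩ := (isCompact_sphere (0:ℂ) 1).elim_finite_subcover U hUopen hUcover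
    set NN := t.sup N with hNN
    -- uniform bound C on low powers
    obtain ⟨x₀, hx₀mem, hx₀⟩ := (isCompact_sphere (0:ℂ) 1).exists_isMaxOn
      ⟨1, by simp⟩ (hd.continuous.norm.continuousOn)
    set B := ‖h x₀‖ with hB
    have hx₀' : ∀ ν ∈ sphere (0:ℂ) 1, ‖h ν‖ ≤ B := fun ν hν => hx₀ hν
    set C := max ‖(1:A)‖ ((max 1 B) ^ NN) with hC
    have hmaxB : (1:ℝ) ≤ max 1 B := le_max_left _ _
    have hC1 : (1:ℝ) ≤ C := le_max_of_le_right (one_le_pow₀ hmaxB)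
    have hCj : ∀ ν ∈ sphere (0:ℂ) 1, ∀ j ≤ NN, ‖h ν ^ j‖ ≤ C := by
      intro ν hν j hj
      rcases Nat.eq_zero_or_pos j with rfl | hj0
      · rw [pow_zero, hC]; exact le_max_left _ _
      · have h1 : ‖h ν ^ j‖ ≤ ‖h ν‖ ^ j := norm_pow_le' _ hj0
        have h2 : ‖h ν‖ ≤ max 1 B := le_max_of_le_right (hx₀' ν hν)
        have h3 : ‖h ν‖ ^ j ≤ (max 1 B) ^ j := pow_le_pow_left₀ (norm_nonneg _) h2 j
        have h4 : (max 1 B) ^ j ≤ (max 1 B) ^ NN := pow_le_pow_right₀ hmaxB hj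
        exact h1.trans (h3.trans (h4.trans (le_max_right _ _)))
    -- the uniform geometric bound on the sphere
    have claim : ∀ n : ℕ, ∀ ν ∈ sphere (0:ℂ) 1, ‖h ν ^ n‖ ≤ C / ε ^ NN * ε ^ n := by
      intro n ν hν
      obtain ⟨i, hit, hiU⟩ := Set.mem_iUnion₂.mp (ht hν)
      have hN0pos : 0 < N i := hNpos i
      have hN0le : N i ≤ NN := Finset.le_sup hit
      have hsmall : ‖h ν ^ N i‖ < ε ^ N i := hiU
      have hεNN : (0:ℝ) < ε ^ NN := pow_pos hε NN
      rcases lt_or_ge n (N i) with hn | hn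
      · -- small case : n < N i ≤ NN
        have hnNN : n ≤ NN := le_trans (Nat.le_of_lt hn) hN0le
        have h1 : ‖h ν ^ n‖ ≤ C := hCj ν hν n hnNN
        have h2 : ε ^ NN ≤ ε ^ n := pow_le_pow_of_le_one hε.le hε1.le hnNN
        calc ‖h ν ^ n‖ ≤ C := h1
        _ = C / ε ^ NN * ε ^ NN := by field_simp
        _ ≤ C / ε ^ NN * ε ^ n := by
            apply mul_le_mul_of_nonneg_left h2
            positivity
      · -- large case
        set q := n / N i with hq
        set r := n % N i with hr
        have hqpos : 0 < q := Nat.div_pos hn hN0pos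
        have hrNN : r ≤ NN := le_trans (Nat.le_of_lt (Nat.mod_lt _ hN0pos)) hN0le
        have hdecomp : h ν ^ n = (h ν ^ N i) ^ q * h ν ^ r := by
          rw [← pow_mul, ← pow_add, Nat.div_add_mod]
        have hnorm1 : ‖(h ν ^ N i) ^ q‖ ≤ (ε ^ N i) ^ q := by
          calc ‖(h ν ^ N i) ^ q‖ ≤ ‖h ν ^ N i‖ ^ q := norm_pow_le' _ hqpos
          _ ≤ (ε ^ N i) ^ q := pow_le_pow_left₀ (norm_nonneg _) hsmall.le q
        have hεpow : (ε ^ N i) ^ q * ε ^ r = ε ^ n := by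
          rw [← pow_mul, ← pow_add, Nat.div_add_mod]
        have h2 : ε ^ r ≥ ε ^ NN := pow_le_pow_of_le_one hε.le hε1.le hrNN
        calc ‖h ν ^ n‖ ≤ ‖(h ν ^ N i) ^ q‖ * ‖h ν ^ r‖ := by
              rw [hdecomp]; exact norm_mul_le _ _
        _ ≤ (ε ^ N i) ^ q * C := by
            apply mul_le_mul hnorm1 (hCj ν hν r hrNN) (norm_nonneg _) (by positivity)
        _ = (ε ^ n / ε ^ r) * C := by
            rw [← hεpow]; field_simp
        _ ≤ (ε ^ n / ε ^ NN) * C := by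
            apply mul_le_mul_of_nonneg_right _ (by linarith)
            apply div_le_div_of_nonneg_left (by positivity) hεNN h2
        _ = C / ε ^ NN * ε ^ n := by ring
    -- maximum modulus principle
    have hmax : ∀ n : ℕ, ‖h 0 ^ n‖ ≤ C / ε ^ NN * ε ^ n := by
      intro n
      have hdc : DiffContOnCl ℂ (fun ν => h ν ^ n) (ball (0:ℂ) 1) :=
        (hdiffpow n).diffContOnCl
      refine Complex.norm_le_of_forall_mem_frontier_norm_le isBounded_ball hdc ?_ ?_
      · intro ν hν
        rw [frontier_ball (0:ℂ) one_ne_zero] at hν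
        exact claim n ν hν
      · exact subset_closure (mem_ball_self one_pos)
    -- conclude via the Gelfand-type bound
    set C' := C / ε ^ NN with hC'
    have hC'pos : 0 < C' := div_pos (lt_of_lt_of_le one_pos hC1) (pow_pos hε NN)
    have h1 : ∀ᶠ n : ℕ in atTop, (ENNReal.ofReal C') ^ (1/(n:ℝ)) ≤ 2 :=
      ENNReal.eventually_pow_one_div_le ENNReal.ofReal_ne_top (by norm_num)
    have h2 : ∀ᶠ n : ℕ in atTop, ((‖(1:A)‖₊ : ℝ≥0∞)) ^ (1/(n:ℝ)) ≤ 2 :=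
      ENNReal.eventually_pow_one_div_le ENNReal.coe_ne_top (by norm_num)
    obtain ⟨m, hm⟩ := ((h1.and h2).and (eventually_ge_atTop 1)).exists
    obtain ⟨⟨hm1, hm2⟩, hm3⟩ := hm
    obtain ⟨n, rfl⟩ : ∃ n : ℕ, m = n + 1 := ⟨m - 1, by omega⟩
    have key := spectrum.spectralRadius_le_pow_nnnorm_pow_one_div ℂ (h 0) n
    have hb : (‖h 0 ^ (n+1)‖₊ : ℝ≥0∞) ≤ ENNReal.ofReal (C' * ε ^ (n+1)) := by
      rw [← ENNReal.ofReal_coe_nnreal, coe_nnnorm]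
      exact ENNReal.ofReal_le_ofReal (hmax (n+1))
    have hcast : ((n:ℝ) + 1) ≠ 0 := by positivity
    have hmid : ((ENNReal.ofReal ε) ^ ((n+1):ℕ)) ^ (1/((n:ℝ)+1)) = ENNReal.ofReal ε := by
      rw [← ENNReal.rpow_natCast, ← ENNReal.rpow_mul]
      push_cast
      rw [mul_one_div, div_self hcast, ENNReal.rpow_one]
    calc spectralRadius ℂ (h 0)
        ≤ (‖h 0 ^ (n+1)‖₊ : ℝ≥0∞) ^ (1/((n:ℝ)+1)) * (‖(1:A)‖₊ : ℝ≥0∞) ^ (1/((n:ℝ)+1)) := by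
          convert key using 3 <;> push_cast <;> ring
    _ ≤ (ENNReal.ofReal (C' * ε^(n+1))) ^ (1/((n:ℝ)+1)) *
          (‖(1:A)‖₊ : ℝ≥0∞) ^ (1/((n:ℝ)+1)) := by
          gcongr
    _ = (ENNReal.ofReal C') ^ (1/((n:ℝ)+1)) * ((ENNReal.ofReal ε) ^ ((n+1):ℕ)) ^ (1/((n:ℝ)+1)) *
          (‖(1:A)‖₊ : ℝ≥0∞) ^ (1/((n:ℝ)+1)) := by
          rw [ENNReal.ofReal_mul hC'pos.le, ENNReal.ofReal_pow hε.le,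
            ENNReal.mul_rpow_of_nonneg _ _ (by positivity)]
    _ ≤ 2 * ENNReal.ofReal ε * 2 := by
          rw [hmid]
          have hb1 : (ENNReal.ofReal C') ^ (1/((n:ℝ)+1)) ≤ 2 := by
            convert hm1 using 2; push_cast; ring
          have hb2 : (‖(1:A)‖₊ : ℝ≥0∞) ^ (1/((n:ℝ)+1)) ≤ 2 := by
            convert hm2 using 2; push_cast; ring
          exact mul_le_mul (mul_le_mul_left hb1 _) hb2 zero_le zero_le
    _ = ENNReal.ofReal (4 * ε) := by
          rw [show (4:ℝ) * ε = 2 * (2 * ε) by ring, ENNReal.ofReal_mul (by norm_num),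
            ENNReal.ofReal_mul (by norm_num)]
          rw [ENNReal.ofReal_ofNat]
          ring
  -- finish
  set r := spectralRadius ℂ (h 0) with hr
  have hfin : r ≠ ⊤ := by
    refine ne_top_of_le_ne_top ?_ (main (1/2) (by norm_num) (by norm_num))
    exact ENNReal.ofReal_ne_top
  by_contra hne
  have hpos : 0 < r.toReal := ENNReal.toReal_pos hne hfin
  set ε := min (r.toReal / 8) (1/4) with hε
  have hεpos : 0 < ε := by
    apply lt_min (by linarith) (by norm_num)
  have hεlt : ε < 1 := lt_of_le_of_lt (min_le_right _ _) (by norm_num)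
  have hle := main ε hεpos hεlt
  have hlt : ENNReal.ofReal (4 * ε) < r := by
    rw [ENNReal.ofReal_lt_iff_lt_toReal (by positivity) hfin]
    have h8 : 4 * ε ≤ 4 * (r.toReal / 8) := by
      have := min_le_left (r.toReal / 8) (1/4:ℝ)
      linarith
    linarith
  exact absurd hle (not_le.mpr hlt)

end CircleLemma
section Zemanek
variable {A : Type*} [NormedRing A] [NormedAlgebra ℂ A] [CompleteSpace A]

lemma spectralRadius_conj_add {z : A} (hz : ∀ x, spectralRadius ℂ (z + x) = spectralRadius ℂ x)
    (u v : A) (huv : u * v = 1) (hvu : v * u = 1) (x : A) :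
    spectralRadius ℂ (u * z * v + x) = spectralRadius ℂ x := by
  have h1 : u * z * v + x = u * (z + v * x * u) * v := by
    have h2 : u * (v * x * u) * v = x := by
      calc u * (v * x * u) * v = (u*v) * x * (u*v) := by noncomm_ring
      _ = x := by rw [huv, one_mul, mul_one]
    rw [mul_add, add_mul, h2]
  rw [h1, spectralRadius_conj u v _ huv hvu, hz (v * x * u),
    spectralRadius_conj v u x hvu huv]

set_option maxHeartbeats 2000000 in
theorem zemanek (z : A) (hz : ∀ x : A, spectralRadius ℂ (z + x) = spectralRadius ℂ x) :
    z ∈ jacobsonRadical A := by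
  rw [mem_jacobsonRadical_iff]
  intro y
  by_contra hcon
  push_neg at hcon
  have hz0 : spectralRadius ℂ z = 0 := by simpa using hz 0
  set v := y * z + 1 with hv
  have hproper : Submodule.span A {v} ≠ ⊤ := by
    intro htop
    have h1 : (1:A) ∈ Submodule.span A {v} := htop ▸ Submodule.mem_top
    obtain ⟨w, hw⟩ := Submodule.mem_span_singleton.mp h1
    exact hcon w (by rwa [smul_eq_mul] at hw)
  obtain ⟨M, hMmax, hMle⟩ := Ideal.exists_le_maximal (Submodule.span A {v}) hproper
  have hvM : v ∈ M := hMle (Submodule.mem_span_singleton_self v)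
  haveI hsimple : IsSimpleModule A (A ⧸ M) :=
    isSimpleModule_iff_isCoatom.mpr (Ideal.isMaximal_def.mp hMmax)
  set ξ : A ⧸ M := Submodule.Quotient.mk 1 with hξdef
  have hmk : ∀ a : A, a • ξ = Submodule.Quotient.mk a := by
    intro a
    rw [hξdef, ← Submodule.Quotient.mk_smul, smul_eq_mul, mul_one]
  have hξ : ξ ≠ 0 := by
    rw [hξdef, Ne, Submodule.Quotient.mk_eq_zero]
    exact fun h1 => hMmax.ne_top ((Ideal.eq_top_iff_one M).mpr h1)
  have hvξ : v • ξ = 0 := by rw [hmk, Submodule.Quotient.mk_eq_zero]; exact hvM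
  have hyzξ : (y * z) • ξ = -ξ := by
    have h1 : (y*z) • ξ + ξ = 0 := by
      have : ((y*z) + 1) • ξ = 0 := by rw [← hv]; exact hvξ
      rwa [add_smul, one_smul] at this
    exact eq_neg_of_add_eq_zero_left h1
  set η := z • ξ with hη
  have hηne : η ≠ 0 := by
    intro h0
    apply hξ
    have h1 : (y * z) • ξ = 0 := by rw [mul_smul, ← hη, h0, smul_zero]
    rw [hyzξ, neg_eq_zero] at h1
    exact h1
  have htrans : ∀ θ : A ⧸ M, θ ≠ 0 → ∀ ζ : A ⧸ M, ∃ a : A, a • θ = ζ := by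
    intro θ hθ ζ
    have hspan : (Submodule.span A {θ} : Submodule A (A ⧸ M)) = ⊤ := by
      rcases eq_bot_or_eq_top (Submodule.span A {θ} : Submodule A (A ⧸ M)) with hb | htop
      · exfalso
        apply hθ
        have hmem : θ ∈ (Submodule.span A {θ} : Submodule A (A ⧸ M)) :=
          Submodule.mem_span_singleton_self θ
        rw [hb] at hmem
        simpa using hmem
      · exact htop
    exact Submodule.mem_span_singleton.mp (hspan ▸ Submodule.mem_top)
  by_cases hcase : ∃ c : A, c • ξ = 0 ∧ c • η = ξ
  · -- analytic case
    obtain ⟨c, hc1, hc2⟩ := hcase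
    set m := c * z - z * c with hm
    have hmξ : m • ξ = ξ := by
      rw [hm, sub_smul, mul_smul, mul_smul, ← hη, hc2, hc1, smul_zero, sub_zero]
    have hrm : spectralRadius ℂ m = 0 := by
      set g : ℂ → A := fun lam =>
        NormedSpace.exp (lam • c) * z * NormedSpace.exp (lam • -c) - z with hgdef
      have hunit : ∀ lam : ℂ,
          NormedSpace.exp (lam • c) * NormedSpace.exp (lam • -c) = 1 ∧
          NormedSpace.exp (lam • -c) * NormedSpace.exp (lam • c) = 1 := by
        intro lam
        have hcomm : Commute (lam • c) (lam • -c) := by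
          apply Commute.smul_left
          apply Commute.smul_right
          exact (Commute.refl c).neg_right
        constructor
        · rw [← NormedSpace.exp_add_of_commute_of_mem_ball (𝕂 := ℂ) hcomm ((NormedSpace.expSeries_radius_eq_top ℂ A).symm ▸ edist_lt_top _ _) ((NormedSpace.expSeries_radius_eq_top ℂ A).symm ▸ edist_lt_top _ _)]
          have h1 : lam • c + lam • -c = 0 := by simp
          rw [h1, NormedSpace.exp_zero]
        · rw [← NormedSpace.exp_add_of_commute_of_mem_ball (𝕂 := ℂ) hcomm.symm ((NormedSpace.expSeries_radius_eq_top ℂ A).symm ▸ edist_lt_top _ _) ((NormedSpace.expSeries_radius_eq_top ℂ A).symm ▸ edist_lt_top _ _)]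
          have h1 : lam • -c + lam • c = 0 := by simp
          rw [h1, NormedSpace.exp_zero]
      have hgrad : ∀ lam : ℂ, spectralRadius ℂ (g lam) = 0 := by
        intro lam
        have h1 : spectralRadius ℂ
            (NormedSpace.exp (lam • c) * z * NormedSpace.exp (lam • -c) + (-z))
            = spectralRadius ℂ (-z) :=
          spectralRadius_conj_add hz _ _ (hunit lam).1 (hunit lam).2 (-z)
        have h2 : g lam
            = NormedSpace.exp (lam • c) * z * NormedSpace.exp (lam • -c) + (-z) := by
          show NormedSpace.exp (lam • c) * z * NormedSpace.exp (lam • -c) - z = _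
          rw [sub_eq_add_neg]
        rw [h2, h1, spectralRadius_neg, hz0]
      have hder : ∀ lam : ℂ, HasDerivAt g
          ((NormedSpace.exp (lam • c) * c * z) * NormedSpace.exp (lam • -c)
            + (NormedSpace.exp (lam • c) * z) * (NormedSpace.exp (lam • -c) * -c)) lam := by
        intro lam
        have h1 : HasDerivAt (fun t : ℂ => NormedSpace.exp (t • c))
            (NormedSpace.exp (lam • c) * c) lam := hasDerivAt_exp_smul_const c lam
        have h2 : HasDerivAt (fun t : ℂ => NormedSpace.exp (t • -c))
            (NormedSpace.exp (lam • -c) * -c) lam := hasDerivAt_exp_smul_const (-c) lam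
        exact ((h1.mul_const z).mul h2).sub_const z
      have hdiff : Differentiable ℂ g := fun lam => (hder lam).differentiableAt
      have hg0 : g 0 = 0 := by
        rw [hgdef]
        simp [NormedSpace.exp_zero]
      have hderiv0 : deriv g 0 = m := by
        rw [(hder 0).deriv, hm]
        simp only [zero_smul, NormedSpace.exp_zero, one_mul, mul_one]
        noncomm_ring
      set h : ℂ → A := dslope g 0 with hhdef
      have hdiffh : Differentiable ℂ h := by
        rw [← differentiableOn_univ]
        exact (Complex.differentiableOn_dslope
          (Filter.univ_mem : (Set.univ : Set ℂ) ∈ nhds 0)).mpr hdiff.differentiableOn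
      have hh0 : h 0 = m := by rw [hhdef, dslope_same, hderiv0]
      have hcircle : ∀ lam : ℂ, ‖lam‖ = 1 → spectralRadius ℂ (h lam) = 0 := by
        intro lam hlam
        have hne : lam ≠ 0 := by
          intro h0
          rw [h0] at hlam
          simpa using hlam
        have heq : h lam = lam⁻¹ • g lam := by
          rw [hhdef, dslope_of_ne g hne, slope_def_module, hg0, sub_zero, sub_zero]
        rw [heq]
        exact spectralRadius_smul_zero (hgrad lam) _
      rw [← hh0]
      exact circle_max_lemma hdiffh hcircle
    have h1m : (1:ℂ) ∈ spectrum ℂ m := by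
      rw [spectrum.mem_iff]
      intro hu
      have hkill : (algebraMap ℂ A 1 - m) • ξ = 0 := by
        rw [sub_smul, map_one, one_smul, hmξ, sub_self]
      obtain ⟨w, hw⟩ := hu
      apply hξ
      calc ξ = ((↑w⁻¹ * ↑w : A)) • ξ := by rw [Units.inv_mul, one_smul]
      _ = (↑w⁻¹ : A) • ((algebraMap ℂ A 1 - m) • ξ) := by rw [mul_smul, hw]
      _ = 0 := by rw [hkill, smul_zero]
    have hcontra := nnnorm_le_spectralRadius_of_mem h1m
    rw [hrm] at hcontra
    simpa using hcontra
  · push_neg at hcase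
    have hann : ∀ a : A, a • ξ = 0 → a • η = 0 := by
      intro a ha
      by_contra hne
      obtain ⟨b, hb⟩ := htrans (a • η) hne ξ
      exact hcase (b * a) (by rw [mul_smul, ha, smul_zero]) (by rw [mul_smul, hb])
    have hMclosed : IsClosed (M : Set A) := by
      have hclne : M.topologicalClosure ≠ ⊤ := by
        intro htop
        have h1 : (1:A) ∈ (M.topologicalClosure : Submodule A A) := htop ▸ Submodule.mem_top
        have h1' : (1:A) ∈ closure (M : Set A) := h1
        obtain ⟨m0, hm0M, hm0⟩ := Metric.mem_closure_iff.mp h1' 1 one_pos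
        have hnorm : ‖1 - m0‖ < 1 := by rwa [dist_eq_norm] at hm0
        have hunit : IsUnit m0 := by
          have h2 := (Units.oneSub (1 - m0) hnorm).isUnit
          rwa [Units.val_oneSub, sub_sub_cancel] at h2
        obtain ⟨um, hum⟩ := hunit
        have h1M : (1:A) ∈ M := by
          have h3 := M.smul_mem (↑um⁻¹ : A) hm0M
          rwa [smul_eq_mul, ← hum, Units.inv_mul] at h3
        exact hMmax.ne_top ((Ideal.eq_top_iff_one M).mpr h1M)
      have hcoatom := Ideal.isMaximal_def.mp hMmax
      rcases (Submodule.le_topologicalClosure M).lt_or_eq with hlt | heq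
      · exact absurd (hcoatom.2 _ hlt) hclne
      · exact heq ▸ Submodule.isClosed_topologicalClosure M
    haveI := hMclosed
    haveI : Nontrivial (A ⧸ M) := ⟨ξ, 0, hξ⟩
    set d₀ : A →ₗ[A] (A ⧸ M) := LinearMap.toSpanSingleton A (A ⧸ M) η with hd₀
    have hker : M ≤ LinearMap.ker d₀ := by
      intro t ht
      rw [LinearMap.mem_ker, hd₀, LinearMap.toSpanSingleton_apply]
      exact hann t (by rw [hmk, Submodule.Quotient.mk_eq_zero]; exact ht)
    set dA : (A ⧸ M) →ₗ[A] (A ⧸ M) := Submodule.liftQ M d₀ hker with hdA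
    have hdAmk : ∀ t : A, dA (Submodule.Quotient.mk t) = t • η := by
      intro t
      rw [hdA, Submodule.liftQ_apply, hd₀, LinearMap.toSpanSingleton_apply]
    set dc : (A ⧸ M) →ₗ[ℂ] (A ⧸ M) := dA.restrictScalars ℂ with hdc
    have hdcmk : ∀ t : A, dc (Submodule.Quotient.mk t) = t • η := fun t => hdAmk t
    have hbound : ∀ x : A ⧸ M, ‖dc x‖ ≤ ‖z‖ * ‖x‖ := by
      intro x
      by_contra hgt
      push_neg at hgt
      set δ := (‖dc x‖ - ‖z‖ * ‖x‖) / (‖z‖ + 1) with hδ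
      have hδpos : 0 < δ := div_pos (by linarith) (by positivity)
      obtain ⟨t, htmk, htlt⟩ := Submodule.Quotient.norm_mk_lt x hδpos
      have h1 : dc x = Submodule.Quotient.mk (t * z) := by
        rw [← htmk, hdcmk, hη, ← mul_smul, hmk]
      have h2 : ‖dc x‖ ≤ ‖t‖ * ‖z‖ := by
        rw [h1]
        exact le_trans (Submodule.Quotient.norm_mk_le M (t * z)) (norm_mul_le t z)
      have h3 : ‖t‖ * ‖z‖ ≤ (‖x‖ + δ) * ‖z‖ :=
        mul_le_mul_of_nonneg_right htlt.le (norm_nonneg z)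
      have h4 : δ * (‖z‖+1) = ‖dc x‖ - ‖z‖*‖x‖ := by
        rw [hδ, div_mul_cancel₀ _ (by positivity : ‖z‖ + 1 ≠ 0)]
      nlinarith [norm_nonneg z, hδpos]
    set d : (A ⧸ M) →L[ℂ] (A ⧸ M) := LinearMap.mkContinuous dc ‖z‖ hbound with hd
    have hdapp : ∀ x : A ⧸ M, d x = dc x := fun x => rfl
    haveI : Nontrivial ((A ⧸ M) →L[ℂ] (A ⧸ M)) := by
      refine ⟨1, 0, fun h1 => hξ ?_⟩
      calc ξ = (1 : (A ⧸ M) →L[ℂ] (A ⧸ M)) ξ := rfl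
      _ = (0 : (A ⧸ M) →L[ℂ] (A ⧸ M)) ξ := by rw [h1]
      _ = 0 := rfl
    obtain ⟨α, hα⟩ := spectrum.nonempty d
    set e : (A ⧸ M) →L[ℂ] (A ⧸ M) := algebraMap ℂ ((A ⧸ M) →L[ℂ] (A ⧸ M)) α - d with he
    have heNotUnit : ¬IsUnit e := spectrum.mem_iff.mp hα
    have halgapp : ∀ x : A ⧸ M, (algebraMap ℂ ((A ⧸ M) →L[ℂ] (A ⧸ M)) α) x = α • x := by
      intro x
      rw [Algebra.algebraMap_eq_smul_one]
      rfl
    have hesmul : ∀ (a : A) (x : A ⧸ M), e (a • x) = a • e x := by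
      intro a x
      rw [he]
      simp only [ContinuousLinearMap.sub_apply]
      have h1 : d (a • x) = a • d x := by
        rw [hdapp, hdapp]
        exact dA.map_smul a x
      have h2 : (algebraMap ℂ ((A ⧸ M) →L[ℂ] (A ⧸ M)) α) (a • x)
          = a • (algebraMap ℂ ((A ⧸ M) →L[ℂ] (A ⧸ M)) α) x := by
        rw [halgapp, halgapp, smul_comm]
      rw [h1, h2, smul_sub]
    by_cases hezero : e = 0
    · have hdξη : d ξ = η := by
        rw [hdapp, hξdef, hdcmk 1, one_smul]
      have hdξ : d ξ = α • ξ := by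
        have h1 : e ξ = 0 := by rw [hezero]; rfl
        rw [he] at h1
        simp only [ContinuousLinearMap.sub_apply] at h1
        rw [halgapp] at h1
        exact (sub_eq_zero.mp h1).symm
      have hαne : α ≠ 0 := by
        intro h0
        apply hηne
        rw [← hdξη, hdξ, h0, zero_smul]
      have hkill : (algebraMap ℂ A α - z) • ξ = 0 := by
        rw [sub_smul, algebraMap_smul, ← hη, ← hdξη, hdξ, sub_self]
      have hspec : α ∈ spectrum ℂ z := by
        rw [spectrum.mem_iff]
        intro hu
        obtain ⟨w, hw⟩ := hu
        apply hξ
        calc ξ = ((↑w⁻¹ * ↑w : A)) • ξ := by rw [Units.inv_mul, one_smul]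
        _ = (↑w⁻¹ : A) • ((algebraMap ℂ A α - z) • ξ) := by rw [mul_smul, hw]
        _ = 0 := by rw [hkill, smul_zero]
      have hcontra := nnnorm_le_spectralRadius_of_mem hspec
      rw [hz0] at hcontra
      apply hαne
      simpa using hcontra
    · -- Schur's lemma: e is bijective, hence a unit, contradiction
      set eA : (A ⧸ M) →ₗ[A] (A ⧸ M) :=
        { toFun := e
          map_add' := e.map_add
          map_smul' := hesmul } with heA
      have heAapp : ∀ x, eA x = e x := fun x => rfl
      have hkerA : LinearMap.ker eA = ⊥ := by
        rcases eq_bot_or_eq_top (LinearMap.ker eA) with hb | htop2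
        · exact hb
        · exfalso
          apply hezero
          ext x
          have hx : x ∈ LinearMap.ker eA := htop2 ▸ Submodule.mem_top
          rw [LinearMap.mem_ker, heAapp] at hx
          simpa using hx
      have hranA : LinearMap.range eA = ⊤ := by
        rcases eq_bot_or_eq_top (LinearMap.range eA) with hb | htop2
        · exfalso
          apply hezero
          ext x
          have hx : eA x ∈ LinearMap.range eA := LinearMap.mem_range_self eA x
          rw [hb] at hx
          rw [Submodule.mem_bot] at hx
          rw [heAapp] at hx
          simpa using hx
        · exact htop2
      have hinj : Function.Injective e := by
        have h1 := LinearMap.ker_eq_bot.mp hkerA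
        intro x y hxy
        exact h1 (by rw [heAapp, heAapp]; exact hxy)
      have hsurjE : Function.Surjective e := by
        have h1 := LinearMap.range_eq_top.mp hranA
        intro x
        obtain ⟨w, hw⟩ := h1 x
        exact ⟨w, by rw [← heAapp]; exact hw⟩
      have hkerC : LinearMap.ker (e : (A ⧸ M) →ₗ[ℂ] (A ⧸ M)) = ⊥ := LinearMap.ker_eq_bot.mpr hinj
      have hranC : LinearMap.range (e : (A ⧸ M) →ₗ[ℂ] (A ⧸ M)) = ⊤ := LinearMap.range_eq_top.mpr hsurjE
      set eq := ContinuousLinearEquiv.ofBijective e hkerC hranC with heq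
      apply heNotUnit
      refine ⟨⟨e, (eq.symm : (A ⧸ M) →L[ℂ] (A ⧸ M)), ?_, ?_⟩, rfl⟩
      · ext x
        rw [ContinuousLinearMap.mul_apply]
        have h1 : e ((eq.symm : (A ⧸ M) →L[ℂ] (A ⧸ M)) x) = eq (eq.symm x) := by
          rw [← ContinuousLinearEquiv.coeFn_ofBijective e hkerC hranC]
          rfl
        rw [h1, ContinuousLinearEquiv.apply_symm_apply]
        rfl
      · ext x
        rw [ContinuousLinearMap.mul_apply]
        have h1 : e x = eq x := by
          rw [← ContinuousLinearEquiv.coeFn_ofBijective e hkerC hranC]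
        rw [h1]
        have h2 : (eq.symm : (A ⧸ M) →L[ℂ] (A ⧸ M)) (eq x) = x :=
          ContinuousLinearEquiv.symm_apply_apply eq x
        rw [h2]
        rfl

end Zemanek

/-- If `T : A → B` is a surjective linear spectral isometry between unital complex Banach
algebras and `A` is semisimple, then `B` is semisimple. -/
theorem semisimple_of_spectral_isometry
    {A B : Type*} [NormedRing A] [NormedAlgebra ℂ A] [CompleteSpace A]
    [NormedRing B] [NormedAlgebra ℂ B] [CompleteSpace B]
    (hA : jacobsonRadical A = ⊥)
    (T : A →ₗ[ℂ] B) (hsurj : Function.Surjective T)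
    (hspec : ∀ a : A, spectralRadius ℂ (T a) = spectralRadius ℂ a) :
    jacobsonRadical B = ⊥ := by
  refine le_antisymm ?_ bot_le
  rw [TwoSidedIdeal.le_iff]
  intro b hb
  rw [SetLike.mem_coe] at hb
  rw [SetLike.mem_coe, TwoSidedIdeal.mem_bot]
  obtain ⟨a, rfl⟩ := hsurj b
  have hP : ∀ x : A, spectralRadius ℂ (a + x) = spectralRadius ℂ x := by
    intro x
    have h1 := hspec (a + x)
    rw [map_add] at h1
    rw [← h1, ← hspec x]
    unfold spectralRadius
    rw [spectrum_add_of_mem_radical hb (T x)]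
  have hmem := zemanek a hP
  rw [hA, TwoSidedIdeal.mem_bot] at hmem
  rw [hmem, map_zero]
end

section
/- Let A be a unital complex semisimple Banach algebra and B a unital complex Banach algebra, and let T : A → B be a unital surjective linear spectral isometry. If A is commutative then B is commutative. -/
open NormedSpace WeakDual

/-- **Lemma 2.2.** If `T` is a unital surjective spectral isometry from a semisimple unital
complex Banach algebra `A` onto a unital complex Banach algebra `B` and `A` is commutative,
then `B` is commutative. -/
theorem commutative_of_spectral_isometry
    {A B : Type*} [NormedRing A] [NormedAlgebra ℂ A] [CompleteSpace A]
    [NormedRing B] [NormedAlgebra ℂ B] [CompleteSpace B]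
    (hA : jacobsonRadical A = ⊥)
    (T : A →ₗ[ℂ] B) (hunital : T 1 = 1) (hsurj : Function.Surjective T)
    (hspec : ∀ a : A, spectralRadius ℂ (T a) = spectralRadius ℂ a)
    (hcomm : ∀ x y : A, x * y = y * x) :
    ∀ x y : B, x * y = y * x := by
  intro x y
  rcases subsingleton_or_nontrivial B with hB | hB
  · exact Subsingleton.elim _ _
  have hAnt : Nontrivial A := by
    rcases subsingleton_or_nontrivial A with hA' | hA'
    · exfalso
      have h1 : T 1 = T 0 := by rw [Subsingleton.elim (1 : A) 0]
      rw [hunital, map_zero] at h1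
      exact one_ne_zero h1
    · exact hA'
  letI : NormedCommRing A := { (inferInstance : NormedRing A) with mul_comm := hcomm }
  -- characters vanish on quasinilpotents
  have hchar0 : ∀ a : A, spectralRadius ℂ a = 0 → ∀ χ : characterSpace ℂ A, χ a = 0 := by
    intro a ha χ
    have h1 : (‖χ a‖₊ : ENNReal) ≤ spectralRadius ℂ a := by
      unfold spectralRadius
      exact le_iSup₂ (f := fun (k : ℂ) (_ : k ∈ spectrum ℂ a) => (‖k‖₊ : ENNReal)) (χ a)
        (AlgHom.apply_mem_spectrum χ a)
    rw [ha, nonpos_iff_eq_zero] at h1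
    simpa using h1
  -- semisimplicity: quasinilpotents are zero
  have hzero : ∀ a : A, spectralRadius ℂ a = 0 → a = 0 := by
    intro a ha
    have hmem : a ∈ jacobsonRadical A := by
      rw [jacobsonRadical, TwoSidedIdeal.mem_jacobson_iff]
      intro z
      have hu : IsUnit (1 + z * a) := by
        by_contra hu
        obtain ⟨χ, hχ⟩ := WeakDual.CharacterSpace.exists_apply_eq_zero hu
        rw [map_add, map_one, map_mul, hchar0 a ha χ, mul_zero, add_zero] at hχ
        exact one_ne_zero hχ
      obtain ⟨u, hu'⟩ := hu
      refine ⟨(↑u⁻¹ : A), ?_⟩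
      have h2 : (↑u⁻¹ : A) * z * a + ↑u⁻¹ - 1 = 0 := by
        have h3 : (↑u⁻¹ : A) * (1 + z * a) = 1 := by rw [← hu']; exact u.inv_mul
        rw [mul_add, mul_one] at h3
        rw [mul_assoc, add_comm ((↑u⁻¹ : A) * (z * a)), h3, sub_self]
      rw [h2]
      exact (⊥ : TwoSidedIdeal A).zero_mem
    rw [hA] at hmem
    exact hmem
  -- T is injective
  have hinj : Function.Injective T := by
    intro a b hab
    have h1 : spectralRadius ℂ (a - b) = 0 := by
      rw [← hspec (a - b), map_sub, hab, sub_self]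
      simp
    exact sub_eq_zero.mp (hzero _ h1)
  -- the linear equivalence
  let e : A ≃ₗ[ℂ] B := LinearEquiv.ofBijective T ⟨hinj, hsurj⟩
  have hTe : ∀ b : B, T (e.symm b) = b := fun b => e.apply_symm_apply b
  -- the key bound on pulled-back characters
  have hkey : ∀ (χ : characterSpace ℂ A) (b : B),
      (‖χ (e.symm b)‖₊ : ENNReal) ≤ spectralRadius ℂ b := by
    intro χ b
    have h1 : (‖χ (e.symm b)‖₊ : ENNReal) ≤ spectralRadius ℂ (e.symm b) := by
      unfold spectralRadius
      exact le_iSup₂ (f := fun (k : ℂ) (_ : k ∈ spectrum ℂ (e.symm b)) => (‖k‖₊ : ENNReal)) _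
        (AlgHom.apply_mem_spectrum χ (e.symm b))
    rw [← hspec (e.symm b), hTe] at h1
    exact h1
  have hsrb : ∀ b : B, spectralRadius ℂ b ≤ (‖b‖₊ * ‖(1 : B)‖₊ : NNReal) := by
    intro b
    refine iSup₂_le fun k hk => ?_
    exact_mod_cast ENNReal.coe_le_coe.mpr <| by
      exact_mod_cast spectrum.norm_le_norm_mul_of_mem hk
  -- pulled-back characters as continuous linear functionals on B
  have hcont : ∀ χ : characterSpace ℂ A, ∃ ψ : B →L[ℂ] ℂ,
      ∀ b : B, ψ b = χ (e.symm b) := by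
    intro χ
    refine ⟨LinearMap.mkContinuous
      ((χ : A →ₗ[ℂ] ℂ).comp (e.symm : B →ₗ[ℂ] A)) (‖(1 : B)‖) ?_, fun b => rfl⟩
    intro b
    have h1 := (hkey χ b).trans (hsrb b)
    have h2 : ‖χ (e.symm b)‖₊ ≤ ‖b‖₊ * ‖(1 : B)‖₊ := by exact_mod_cast h1
    calc ‖((χ : A →ₗ[ℂ] ℂ).comp (e.symm : B →ₗ[ℂ] A)) b‖ = ‖χ (e.symm b)‖ := rfl
      _ ≤ ‖b‖ * ‖(1 : B)‖ := by exact_mod_cast h2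
      _ = ‖(1 : B)‖ * ‖b‖ := mul_comm _ _
  -- the entire function
  set f : ℂ → B := fun lam => exp (lam • x) * y * exp (lam • (-x)) with hf
  have hdf : Differentiable ℂ f := by
    have h1 : Differentiable ℂ (fun lam : ℂ => exp (lam • x)) :=
      fun t => (hasDerivAt_exp_smul_const x t).differentiableAt
    have h2 : Differentiable ℂ (fun lam : ℂ => exp (lam • (-x))) :=
      fun t => (hasDerivAt_exp_smul_const (-x) t).differentiableAt
    exact (h1.mul (differentiable_const y)).mul h2
  -- spectral radius of f is constant
  have hfu : ∀ lam : ℂ, ∃ u : Bˣ, (u : B) = exp (lam • x) ∧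
      ((u⁻¹ : Bˣ) : B) = exp (lam • (-x)) := by
    intro lam
    letI : NormedAlgebra ℚ B := NormedAlgebra.restrictScalars ℚ ℂ B
    obtain ⟨u, hu⟩ := isUnit_exp (lam • x)
    refine ⟨u, hu, ?_⟩
    have h1 : Ring.inverse ((u : B)) = ((u⁻¹ : Bˣ) : B) := Ring.inverse_unit u
    rw [hu] at h1
    rw [← h1, Ring.inverse_exp, ← smul_neg]
  have hsr : ∀ lam : ℂ, spectralRadius ℂ (f lam) = spectralRadius ℂ y := by
    intro lam
    obtain ⟨u, hu1, hu2⟩ := hfu lam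
    have : f lam = (u : B) * y * ((u⁻¹ : Bˣ) : B) := by rw [hu1, hu2]
    rw [this]
    unfold spectralRadius
    rw [spectrum.units_conjugate]
  -- Liouville
  have hconst : ∀ lam : ℂ, f lam = y := by
    intro lam
    have hfy : ∀ χ : characterSpace ℂ A, χ (e.symm (f lam)) = χ (e.symm y) := by
      intro χ
      obtain ⟨ψ, hψ⟩ := hcont χ
      have hdg : Differentiable ℂ (fun t => ψ (f t)) := ψ.differentiable.comp hdf
      have hbg : Bornology.IsBounded (Set.range fun t => ψ (f t)) := by
        rw [isBounded_iff_forall_norm_le]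
        refine ⟨‖y‖ * ‖(1 : B)‖, ?_⟩
        rintro _ ⟨t, rfl⟩
        show ‖ψ (f t)‖ ≤ ‖y‖ * ‖(1 : B)‖
        rw [hψ]
        have h1 := (hkey χ (f t)).trans_eq (hsr t)
        have h2 := h1.trans (hsrb y)
        have h3 : ‖χ (e.symm (f t))‖₊ ≤ ‖y‖₊ * ‖(1 : B)‖₊ := by exact_mod_cast h2
        exact_mod_cast h3
      have h0 : ψ (f lam) = ψ (f 0) := hdg.apply_eq_apply_of_bounded hbg lam 0
      have hf0 : f 0 = y := by
        simp [hf, zero_smul, exp_zero]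
      rw [hf0] at h0
      rw [← hψ, ← hψ, h0]
    have hd0 : spectralRadius ℂ (e.symm (f lam) - e.symm y) = 0 := by
      refine le_antisymm ?_ zero_le
      refine iSup₂_le fun k hk => ?_
      rw [WeakDual.CharacterSpace.mem_spectrum_iff_exists] at hk
      obtain ⟨χ, hχ⟩ := hk
      rw [map_sub, hfy χ, sub_self] at hχ
      simp [← hχ]
    have := hzero _ hd0
    have h5 : e.symm (f lam) = e.symm y := sub_eq_zero.mp this
    have := congrArg e h5
    simpa using this
  -- conclude commutativity
  have hcomm' : ∀ lam : ℂ, exp (lam • x) * y = y * exp (lam • x) := by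
    intro lam
    have h1 := hconst lam
    obtain ⟨u, hu1, hu2⟩ := hfu lam
    have h2 : exp (lam • (-x)) * exp (lam • x) = 1 := by
      rw [← hu1, ← hu2]; exact u.inv_mul
    calc exp (lam • x) * y
        = (exp (lam • x) * y * exp (lam • (-x))) * exp (lam • x) := by
          rw [mul_assoc, mul_assoc, h2, mul_one]
      _ = y * exp (lam • x) := by
          rw [show exp (lam • x) * y * exp (lam • (-x)) = y from h1]
  -- differentiate at 0
  have hF : HasDerivAt (fun lam : ℂ => exp (lam • x) * y)
      (exp ((0 : ℂ) • x) * x * y) 0 :=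
    (hasDerivAt_exp_smul_const x 0).mul_const y
  have hG : HasDerivAt (fun lam : ℂ => y * exp (lam • x))
      (y * (exp ((0 : ℂ) • x) * x)) 0 :=
    (hasDerivAt_exp_smul_const x 0).const_mul y
  have hFG : (fun lam : ℂ => exp (lam • x) * y) = fun lam : ℂ => y * exp (lam • x) :=
    funext hcomm'
  rw [hFG] at hF
  have := hF.unique hG
  rw [zero_smul, exp_zero, one_mul] at this
  exact this
end

section
/- Let B be a unital complex Banach algebra, S : B → B a unital surjective linear spectral isometry, and I a closed two-sided ideal of B such that B/I is semisimple and r(Sy + I) = r(y + I) for all y ∈ B. Then S induces a well-defined unital surjective spectral isometry S^I : B/I → B/I satisfying S^I(y + I) = Sy + I for all y ∈ B. -/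
open scoped ENNReal NNReal

section Aux

variable {C : Type*} [NormedRing C] [NormedAlgebra ℂ C] [CompleteSpace C]

lemma sr_neg (x : C) : spectralRadius ℂ (-x) = spectralRadius ℂ x := by
  unfold spectralRadius
  rw [← spectrum.neg_eq]
  apply le_antisymm
  · refine iSup₂_le fun k hk => ?_
    rw [Set.mem_neg] at hk
    simpa [nnnorm_neg] using le_iSup₂ (f := fun k (_ : k ∈ spectrum ℂ x) => (‖k‖₊ : ℝ≥0∞)) (-k) hk
  · refine iSup₂_le fun k hk => ?_
    have hk' : -k ∈ -spectrum ℂ x := by simpa [Set.mem_neg] using hk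
    simpa [nnnorm_neg] using le_iSup₂ (f := fun k (_ : k ∈ -spectrum ℂ x) => (‖k‖₊ : ℝ≥0∞)) (-k) hk'

lemma sr_sub (a : C) (H : ∀ c : C, spectralRadius ℂ (a + c) = spectralRadius ℂ c)
    (c : C) : spectralRadius ℂ (c - a) = spectralRadius ℂ c := by
  have h1 : c - a = -(a + -c) := by abel
  rw [h1, sr_neg, H (-c), sr_neg]

lemma mem_spectrum_le (x : C) {k : ℂ} (hk : k ∈ spectrum ℂ x) :
    (‖k‖₊ : ℝ≥0∞) ≤ spectralRadius ℂ x :=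
  le_iSup₂ (f := fun k (_ : k ∈ spectrum ℂ x) => (‖k‖₊ : ℝ≥0∞)) k hk

/-- Core lemma: if `a` satisfies the Zemánek condition and `u` is a unit whose inverse has
spectrum in a right half-plane `re ≥ δ` and bounded by `M`, then `σ(u * a) ⊆ {0}`. -/
lemma lemA (a : C) (H : ∀ c : C, spectralRadius ℂ (a + c) = spectralRadius ℂ c)
    (u : Cˣ) (δ M : ℝ) (hδ : 0 < δ)
    (hsep : ∀ w ∈ spectrum ℂ ((↑u⁻¹ : C)), δ ≤ w.re ∧ ‖w‖ ≤ M)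
    {μ : ℂ} (hμ : μ ≠ 0) : IsUnit (algebraMap ℂ C μ - ↑u * a) := by
  by_contra hcon
  set x : C := μ • (↑u⁻¹ : C) with hx
  have hxa : ¬ IsUnit (x - a) := by
    intro hxa
    apply hcon
    have hrw : (algebraMap ℂ C μ - ↑u * a) = ↑u * (x - a) := by
      rw [mul_sub, hx, mul_smul_comm, Units.mul_inv, Algebra.algebraMap_eq_smul_one]
    rw [hrw]
    exact (Units.isUnit_units_mul u _).mpr hxa
  -- key inequality : ∀ ν, ‖ν‖ ≤ r (x - algebraMap ν)
  have key : ∀ ν : ℂ, (‖ν‖₊ : ℝ≥0∞) ≤ spectralRadius ℂ (x - algebraMap ℂ C ν) := by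
    intro ν
    have h0 : (0 : ℂ) ∈ spectrum ℂ (x - a) := (spectrum.zero_mem_iff (R := ℂ)).mpr hxa
    have h1 : (-ν) ∈ spectrum ℂ ((x - a) - algebraMap ℂ C ν) := by
      rw [← spectrum.sub_singleton_eq, Set.mem_sub]
      exact ⟨0, h0, ν, rfl, by ring⟩
    have h2 : (‖ν‖₊ : ℝ≥0∞) ≤ spectralRadius ℂ ((x - a) - algebraMap ℂ C ν) := by
      simpa [nnnorm_neg] using mem_spectrum_le _ h1
    have h3 : (x - a) - algebraMap ℂ C ν = (x - algebraMap ℂ C ν) - a := by abel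
    rwa [h3, sr_sub a H] at h2
  -- choose ν := μ * t with t := M^2/(2δ) + 1
  set t : ℝ := M ^ 2 / (2 * δ) + 1 with ht
  have ht0 : 0 < t := by positivity
  set ν : ℂ := μ * (t : ℂ) with hν
  have hν0 : ν ≠ 0 := mul_ne_zero hμ (by exact_mod_cast ht0.ne')
  -- spectrum of x - ν : elements are μ*w - μ*t with w ∈ σ(u⁻¹)
  set s : ℝ := ‖μ‖ * Real.sqrt (t ^ 2 - 2 * δ) with hs
  have hbound : spectralRadius ℂ (x - algebraMap ℂ C ν) ≤ ENNReal.ofReal s := by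
    refine iSup₂_le fun k hk => ?_
    rw [← spectrum.sub_singleton_eq, Set.mem_sub] at hk
    obtain ⟨p, hp, q, hq, hpq⟩ := hk
    rw [Set.mem_singleton_iff] at hq
    subst hq
    -- p ∈ σ (μ • u⁻¹), so p = μ * w with w := μ⁻¹ * p
    set w : ℂ := μ⁻¹ * p with hwdef
    have hw : w ∈ spectrum ℂ ((↑u⁻¹ : C)) := by
      have hp' : (Units.mk0 μ hμ) • w ∈ spectrum ℂ ((Units.mk0 μ hμ) • (↑u⁻¹ : C)) := by
        have h1 : (Units.mk0 μ hμ) • w = p := by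
          simp [Units.smul_def, hwdef, smul_eq_mul, ← mul_assoc, mul_inv_cancel₀ hμ]
        have h2 : (Units.mk0 μ hμ) • (↑u⁻¹ : C) = x := by
          simp [Units.smul_def, hx]
        rw [h1, h2]; exact hp
      exact spectrum.smul_mem_smul_iff.mp hp'
    obtain ⟨hwre, hwnorm⟩ := hsep w hw
    have hwp' : p = μ * w := by
      rw [hwdef, ← mul_assoc, mul_inv_cancel₀ hμ, one_mul]
    -- ‖w - t‖^2 ≤ t^2 - 2δ
    have hcalc : ‖w - (t : ℂ)‖ ^ 2 ≤ t ^ 2 - 2 * δ := by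
      have hexp : ‖w - (t : ℂ)‖ ^ 2 = ‖w‖ ^ 2 - 2 * t * w.re + t ^ 2 := by
        simp only [Complex.sq_norm, Complex.normSq_apply,
          Complex.sub_re, Complex.sub_im, Complex.ofReal_re, Complex.ofReal_im]
        ring
      have h2t : 2 * t * δ ≤ 2 * t * w.re := by nlinarith
      have hM : ‖w‖ ^ 2 ≤ M ^ 2 := by nlinarith [norm_nonneg w]
      have : M ^ 2 - 2 * t * δ = -(2 * δ) := by
        rw [ht]
        have h2 : M ^ 2 / (2 * δ) * (2 * δ) = M ^ 2 := div_mul_cancel₀ _ (by positivity)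
        linear_combination -h2
      nlinarith
    have hn0 : (0:ℝ) ≤ t ^ 2 - 2 * δ := le_trans (by positivity) hcalc
    have hk2 : ‖k‖ ≤ s := by
      have : k = μ * (w - (t:ℂ)) := by rw [← hpq, hwp', hν]; ring
      rw [this, norm_mul, hs]
      refine mul_le_mul_of_nonneg_left ?_ (norm_nonneg μ)
      have := Real.sqrt_le_sqrt hcalc
      rwa [Real.sqrt_sq (norm_nonneg _)] at this
    calc (‖k‖₊ : ℝ≥0∞) = ENNReal.ofReal ‖k‖ := by
          rw [← enorm_eq_nnnorm, ← ofReal_norm]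
      _ ≤ ENNReal.ofReal s := ENNReal.ofReal_le_ofReal hk2
  -- contradiction: ‖ν‖ ≤ s < ‖ν‖
  have hlt : s < ‖ν‖ := by
    rw [hν, norm_mul, hs, Complex.norm_real, Real.norm_of_nonneg ht0.le]
    refine mul_lt_mul_of_pos_left ?_ (norm_pos_iff.mpr hμ)
    rw [Real.sqrt_lt' ht0]
    linarith
  have := (key ν).trans hbound
  rw [← enorm_eq_nnnorm, ← ofReal_norm] at this
  have hs0 : 0 ≤ s := by positivity
  have := (ENNReal.ofReal_le_ofReal_iff hs0).mp this
  linarith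

end Aux

section Aux2

variable {C : Type*} [NormedRing C] [NormedAlgebra ℂ C] [CompleteSpace C]

set_option maxHeartbeats 1000000 in
lemma lemB (a : C) (H : ∀ c : C, spectralRadius ℂ (a + c) = spectralRadius ℂ c)
    (b : C) : IsUnit (1 + b * a) := by
  set N : ℝ := ‖b‖ * ‖(1 : C)‖ with hN
  have hN0 : (0:ℝ) ≤ N := by positivity
  set t : ℝ := N + 1 with ht
  have ht0 : (0:ℝ) < t := by linarith
  have htc : ((t : ℂ)) ≠ 0 := by exact_mod_cast ht0.ne'
  have htnorm : ‖((t:ℝ) : ℂ)‖ = t := by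
    rw [Complex.norm_real, Real.norm_of_nonneg ht0.le]
  have hσb : ∀ k ∈ spectrum ℂ b, ‖k‖ ≤ N := by
    intro k hk
    have h1 : (‖k‖₊ : ℝ≥0∞) ≤ spectralRadius ℂ b := mem_spectrum_le b hk
    have h2 := spectrum.spectralRadius_le_pow_nnnorm_pow_one_div ℂ b 0
    norm_num at h2
    have h3 : (‖k‖₊ : ℝ≥0∞) ≤ ((‖b‖₊ * ‖(1:C)‖₊ : ℝ≥0) : ℝ≥0∞) := by
      rw [ENNReal.coe_mul]; exact h1.trans h2
    rw [ENNReal.coe_le_coe] at h3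
    calc ‖k‖ = ((‖k‖₊ : ℝ≥0) : ℝ) := rfl
      _ ≤ ((‖b‖₊ * ‖(1:C)‖₊ : ℝ≥0) : ℝ) := by exact_mod_cast h3
      _ = N := by simp [hN]
  -- u₁ := b + t is invertible
  have hu1 : IsUnit (b + algebraMap ℂ C (t:ℂ)) := by
    have hnot : (-(t:ℂ)) ∉ spectrum ℂ b := by
      intro hmem
      have h4 := hσb _ hmem
      rw [norm_neg, htnorm] at h4
      linarith
    have h5 := spectrum.notMem_iff.mp hnot
    have h3 : algebraMap ℂ C (-(t:ℂ)) - b = -(b + algebraMap ℂ C (t:ℂ)) := by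
      rw [map_neg]; abel
    rw [h3] at h5
    have h6 := h5.neg
    rwa [neg_neg] at h6
  set u₁ := hu1.unit with hu₁
  have hu1coe : (↑u₁ : C) = b + algebraMap ℂ C (t:ℂ) := hu1.unit_spec
  have hNt : (0:ℝ) < N + t := by linarith
  -- spectrum of u₁⁻¹ lies in a right half plane
  have hsep1 : ∀ w ∈ spectrum ℂ ((↑u₁⁻¹ : C)), (1/(N+t)^2 : ℝ) ≤ w.re ∧ ‖w‖ ≤ 1 := by
    intro w hw
    have hw0 : w ≠ 0 := spectrum.ne_zero_of_mem_of_unit (a := u₁⁻¹) hw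
    have hw' : w⁻¹ ∈ spectrum ℂ ((↑u₁ : C)) := by
      rw [← spectrum.map_inv] at hw
      exact Set.mem_inv.mp hw
    rw [hu1coe, ← spectrum.add_singleton_eq, Set.mem_add] at hw'
    obtain ⟨k, hk, q, hq, hkq⟩ := hw'
    rw [Set.mem_singleton_iff] at hq
    subst hq
    have hknorm := hσb k hk
    have hwinv : w = (k + (t:ℂ))⁻¹ := by
      rw [hkq, inv_inv]
    have hkt0 : k + (t:ℂ) ≠ 0 := by
      intro h0
      rw [h0] at hkq
      exact hw0 (by simpa using congrArg Inv.inv hkq.symm)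
    -- bounds on ‖k + t‖
    have hupp : ‖k + (t:ℂ)‖ ≤ N + t := by
      calc ‖k + (t:ℂ)‖ ≤ ‖k‖ + ‖((t:ℝ):ℂ)‖ := norm_add_le _ _
        _ ≤ N + t := by rw [htnorm]; linarith
    have hlow : (1:ℝ) ≤ ‖k + (t:ℂ)‖ := by
      have h7 : ‖((t:ℝ):ℂ)‖ ≤ ‖k + (t:ℂ)‖ + ‖-k‖ := by
        calc ‖((t:ℝ):ℂ)‖ = ‖(k + (t:ℂ)) + (-k)‖ := by ring_nf
          _ ≤ ‖k + (t:ℂ)‖ + ‖-k‖ := norm_add_le _ _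
      rw [htnorm, norm_neg] at h7
      have : t - N ≤ ‖k + (t:ℂ)‖ := by linarith
      linarith [show t - N = 1 by rw [ht]; ring]
    constructor
    · -- real part bound
      rw [hwinv, Complex.inv_re]
      have hre : (1:ℝ) ≤ (k + (t:ℂ)).re := by
        have h8 : -‖k‖ ≤ k.re := by
          have := abs_le.mp (Complex.abs_re_le_norm k)
          linarith [this.1]
        simp only [Complex.add_re, Complex.ofReal_re]
        have : t - N = 1 := by rw [ht]; ring
        linarith
      have hnsq : Complex.normSq (k + (t:ℂ)) = ‖k + (t:ℂ)‖^2 := by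
        rw [← Complex.sq_norm]
      have hpos : (0:ℝ) < Complex.normSq (k + (t:ℂ)) := by
        rw [hnsq]; positivity
      rw [div_le_div_iff₀ (by positivity) hpos]
      have h1 : Complex.normSq (k + (t:ℂ)) ≤ (N+t)^2 := by
        rw [hnsq]; nlinarith [norm_nonneg (k + (t:ℂ))]
      nlinarith [h1, hre, hNt]
    · rw [hwinv, norm_inv]
      rw [inv_le_one_iff₀]
      right; exact hlow
  have hδ1 : (0:ℝ) < 1/(N+t)^2 := by positivity
  have A1 : ∀ μ : ℂ, μ ≠ 0 → IsUnit (algebraMap ℂ C μ - ↑u₁ * a) :=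
    fun μ hμ => lemA a H u₁ _ 1 hδ1 hsep1 hμ
  -- u₂ := 1 + u₁ * a is invertible with spectrum {1}
  have hu2 : IsUnit (1 + ↑u₁ * a) := by
    have h9 := A1 (-1) (by norm_num)
    have h3 : algebraMap ℂ C (-1 : ℂ) - ↑u₁*a = -(1 + ↑u₁ * a) := by
      rw [map_neg, map_one]; abel
    rw [h3] at h9
    have h10 := h9.neg
    rwa [neg_neg] at h10
  set u₂ := hu2.unit with hu₂
  have hu2coe : (↑u₂ : C) = 1 + ↑u₁ * a := hu2.unit_spec
  have hσu2 : ∀ z ∈ spectrum ℂ ((↑u₂ : C)), z = 1 := by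
    intro z hz
    by_contra hz1
    rw [hu2coe] at hz
    have hz' : z - 1 ∈ spectrum ℂ ((↑u₁ : C) * a) := by
      rw [show (1:C) + ↑u₁*a = algebraMap ℂ C 1 + ↑u₁*a by rw [map_one],
        ← spectrum.singleton_add_eq, Set.mem_add] at hz
      obtain ⟨q, hq, m, hm, hqm⟩ := hz
      rw [Set.mem_singleton_iff] at hq
      subst hq
      have : m = z - 1 := by rw [← hqm]; ring
      rwa [← this]
    have hne : z - 1 ≠ 0 := sub_ne_zero.mpr hz1
    exact (spectrum.mem_iff.mp hz') (A1 (z-1) hne)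
  have hsep2 : ∀ w ∈ spectrum ℂ ((↑(u₂⁻¹)⁻¹ : C)), (1/2 : ℝ) ≤ w.re ∧ ‖w‖ ≤ 1 := by
    intro w hw
    rw [inv_inv] at hw
    have := hσu2 w hw
    subst this
    norm_num
  have A2 : ∀ μ : ℂ, μ ≠ 0 → IsUnit (algebraMap ℂ C μ - ↑u₂⁻¹ * a) :=
    fun μ hμ => lemA a H u₂⁻¹ (1/2) 1 (by norm_num) hsep2 hμ
  have hv : IsUnit (algebraMap ℂ C ((t:ℂ)⁻¹) - ↑u₂⁻¹ * a) := A2 _ (inv_ne_zero htc)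
  -- assemble : 1 + b*a = u₂ * (↑ₐ t * (↑ₐ t⁻¹ - u₂⁻¹ * a))
  have hfinal : 1 + b * a =
      ↑u₂ * (algebraMap ℂ C (t:ℂ) * (algebraMap ℂ C ((t:ℂ)⁻¹) - ↑u₂⁻¹ * a)) := by
    rw [mul_sub, ← map_mul, mul_inv_cancel₀ htc, map_one, mul_sub, mul_one]
    have hc : (↑u₂ : C) * ((algebraMap ℂ C (t:ℂ)) * (↑u₂⁻¹ * a))
        = algebraMap ℂ C (t:ℂ) * a := by
      rw [show (algebraMap ℂ C (t:ℂ)) * (↑u₂⁻¹ * a) = ↑u₂⁻¹ * ((algebraMap ℂ C (t:ℂ)) * a) by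
          rw [← mul_assoc, Algebra.commutes (t:ℂ) ((↑u₂⁻¹ : C)), mul_assoc],
        ← mul_assoc, Units.mul_inv, one_mul]
    rw [hc, hu2coe, hu1coe, add_mul]
    abel
  rw [hfinal]
  exact u₂.isUnit.mul ((htc.isUnit.map (algebraMap ℂ C)).mul hv)

end Aux2


/-- **Lemma 2.3.** Let `S` be a unital surjective spectral isometry of a unital complex
Banach algebra `B` and let `I` be a closed two-sided ideal such that the quotient `B/I` is
semisimple and `r(Sy + I) = r(y + I)` for all `y`.  (The quotient is modelled by a surjective
algebra homomorphism `π : B → C` with closed kernel `I`.)  Then `S` induces a unital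
surjective spectral isometry `S^I` on the quotient with `S^I (y + I) = S y + I`. -/
theorem spectral_isometry_induces_quotient_spectral_isometry
    {B C : Type*} [NormedRing B] [NormedAlgebra ℂ B] [CompleteSpace B]
    [NormedRing C] [NormedAlgebra ℂ C] [CompleteSpace C]
    (S : B →ₗ[ℂ] B) (hunital : S 1 = 1) (hSsurj : Function.Surjective S)
    (hspec : ∀ y : B, spectralRadius ℂ (S y) = spectralRadius ℂ y)
    (π : B →ₐ[ℂ] C) (hπsurj : Function.Surjective π)
    (hclosed : IsClosed {x : B | π x = 0})
    (hsemisimple : jacobsonRadical C = ⊥)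
    (hquot : ∀ y : B, spectralRadius ℂ (π (S y)) = spectralRadius ℂ (π y)) :
    ∃ S' : C →ₗ[ℂ] C, S' 1 = 1 ∧ Function.Surjective S' ∧
      (∀ c : C, spectralRadius ℂ (S' c) = spectralRadius ℂ c) ∧
      ∀ y : B, S' (π y) = π (S y) := by
  classical
  -- surjectivity of π ∘ S
  have hπS : ∀ c : C, ∃ y : B, π (S y) = c := by
    intro c
    obtain ⟨b, hb⟩ := hπsurj c
    obtain ⟨y, hy⟩ := hSsurj b
    exact ⟨y, by rw [hy, hb]⟩
  -- the key well-definedness lemma : π y = 0 → π (S y) = 0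
  have hker : ∀ y : B, π y = 0 → π (S y) = 0 := by
    intro y hy
    set a : C := π (S y) with ha
    -- a satisfies the Zemánek condition
    have H : ∀ c : C, spectralRadius ℂ (a + c) = spectralRadius ℂ c := by
      intro c
      obtain ⟨z, hz⟩ := hπS c
      have h1 : a + c = π (S (y + z)) := by
        rw [map_add, map_add, ha, hz]
      have h2 : π (y + z) = π z := by rw [map_add, hy, zero_add]
      rw [h1, hquot (y + z), h2, ← hz, hquot z]
    -- hence a lies in the Jacobson radical
    have hrad : a ∈ jacobsonRadical C := by
      rw [jacobsonRadical, TwoSidedIdeal.mem_jacobson_iff]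
      intro c
      obtain ⟨u, huu⟩ := lemB a H c
      refine ⟨↑u⁻¹, ?_⟩
      have h5 : (↑u⁻¹ : C) * c * a + ↑u⁻¹ - 1 = 0 := by
        have h3 : (↑u⁻¹ : C) * c * a + ↑u⁻¹ = ↑u⁻¹ * (1 + c * a) := by
          rw [mul_add, mul_one, mul_assoc]; abel
        rw [h3, ← huu, Units.inv_mul, sub_self]
      rw [h5]
      exact TwoSidedIdeal.zero_mem _
    rw [hsemisimple, TwoSidedIdeal.mem_bot] at hrad
    exact hrad
  -- a linear section of π
  obtain ⟨g, hg⟩ := (π.toLinearMap).exists_rightInverse_of_surjective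
    (LinearMap.range_eq_top.mpr hπsurj)
  have hgc : ∀ c : C, π (g c) = c := fun c => congrArg (fun f => f c) hg
  have key4 : ∀ y : B, π (S (g (π y))) = π (S y) := by
    intro y
    have hd : π (g (π y) - y) = 0 := by rw [map_sub, hgc, sub_self]
    have h6 := hker _ hd
    rw [map_sub, map_sub, sub_eq_zero] at h6
    exact h6
  refine ⟨π.toLinearMap ∘ₗ (S ∘ₗ g), ?_, ?_, ?_, ?_⟩
  · show π (S (g (1 : C))) = 1
    calc π (S (g (1:C))) = π (S (g (π 1))) := by rw [show (π 1 : C) = 1 from map_one π]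
      _ = π (S 1) := key4 1
      _ = 1 := by rw [hunital, map_one]
  · intro c
    obtain ⟨y, hy⟩ := hπS c
    exact ⟨π y, by show π (S (g (π y))) = c; rw [key4 y, hy]⟩
  · intro c
    show spectralRadius ℂ (π (S (g c))) = spectralRadius ℂ c
    rw [hquot (g c), hgc c]
  · intro y
    show π (S (g (π y))) = π (S y)
    exact key4 y
end

section
/- Let A be a unital semisimple complex Banach algebra, B a unital complex Banach algebra, and T : A → B a surjective linear spectral isometry. Then T is bounded (continuous). -/
set_option linter.unusedSectionVars false
set_option linter.unusedVariables false
set_option maxHeartbeats 1000000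

namespace SpecIso

open Filter Metric Set
open scoped Topology ENNReal NNReal

variable {E : Type*} [NormedRing E] [NormedAlgebra ℂ E] [CompleteSpace E]

/-- real-valued spectral radius -/
noncomputable def rho (x : E) : ℝ := (spectralRadius ℂ x).toReal

lemma sr_lt_top (x : E) : spectralRadius ℂ x < ⊤ := by
  refine lt_of_le_of_lt (iSup₂_le fun k hk => ?_)
    (ENNReal.coe_lt_top (r := ‖x‖₊ * ‖(1:E)‖₊))
  have := spectrum.subset_closedBall_norm_mul (𝕜 := ℂ) x hk
  simp only [mem_closedBall, dist_zero_right] at this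
  exact ENNReal.coe_le_coe.2 (by simpa [← NNReal.coe_le_coe] using this)

lemma rho_nonneg (x : E) : 0 ≤ rho x := ENNReal.toReal_nonneg

lemma norm_le_rho_of_mem {x : E} {k : ℂ} (hk : k ∈ spectrum ℂ x) : ‖k‖ ≤ rho x := by
  have h1 : (‖k‖₊ : ℝ≥0∞) ≤ spectralRadius ℂ x := le_iSup₂ (f := fun k _ => (‖k‖₊ : ℝ≥0∞)) k hk
  have := ENNReal.toReal_mono (sr_lt_top x).ne h1
  simpa [rho] using this

lemma rho_le_of_subset {x : E} {R : ℝ} (h : ∀ k ∈ spectrum ℂ x, ‖k‖ ≤ R) (hR : 0 ≤ R) :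
    rho x ≤ R := by
  have : spectralRadius ℂ x ≤ ENNReal.ofReal R := by
    refine iSup₂_le fun k hk => ?_
    rw [← ENNReal.ofReal_coe_nnreal]
    exact ENNReal.ofReal_le_ofReal (by simpa using h k hk)
  calc rho x ≤ (ENNReal.ofReal R).toReal := ENNReal.toReal_mono ENNReal.ofReal_ne_top this
  _ = R := ENNReal.toReal_ofReal hR

/-- Gelfand formula, real version -/
lemma rho_tendsto (x : E) :
    Tendsto (fun n : ℕ => ‖x ^ n‖ ^ (1 / n : ℝ)) atTop (𝓝 (rho x)) := by
  have h := spectrum.pow_norm_pow_one_div_tendsto_nhds_spectralRadius x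
  have h2 : Tendsto (fun n : ℕ => (ENNReal.ofReal (‖x ^ n‖ ^ (1 / n : ℝ))).toReal)
      atTop (𝓝 (rho x)) :=
    (ENNReal.tendsto_toReal (sr_lt_top x).ne).comp h
  refine h2.congr fun n => ?_
  exact ENNReal.toReal_ofReal (Real.rpow_nonneg (norm_nonneg _) _)


/-- dyadic Gelfand sequence -/
noncomputable def g (k : ℕ) (x : E) : ℝ := ‖x ^ (2 ^ k)‖ ^ (((2:ℝ) ^ k)⁻¹)

lemma g_nonneg (k : ℕ) (x : E) : 0 ≤ g k x := Real.rpow_nonneg (norm_nonneg _) _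

lemma g_succ_le (k : ℕ) (x : E) : g (k+1) x ≤ g k x := by
  unfold g
  have h1 : ‖x ^ (2 ^ (k+1))‖ ≤ ‖x ^ (2 ^ k)‖ * ‖x ^ (2 ^ k)‖ := by
    rw [pow_succ, mul_comm (2^k) 2, two_mul, pow_add]
    exact norm_mul_le _ _
  have h2 : (0:ℝ) ≤ ‖x ^ (2 ^ k)‖ := norm_nonneg _
  calc ‖x ^ (2 ^ (k+1))‖ ^ (((2:ℝ) ^ (k+1))⁻¹)
      ≤ (‖x ^ (2 ^ k)‖ * ‖x ^ (2 ^ k)‖) ^ (((2:ℝ) ^ (k+1))⁻¹) :=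
        Real.rpow_le_rpow (norm_nonneg _) h1 (by positivity)
    _ = ((‖x ^ (2 ^ k)‖ ^ (2:ℕ))) ^ (((2:ℝ) ^ (k+1))⁻¹) := by rw [sq]
    _ = ‖x ^ (2 ^ k)‖ ^ ((2:ℝ) * ((2:ℝ) ^ (k+1))⁻¹) := by
        rw [← Real.rpow_natCast (‖x ^ (2 ^ k)‖) 2, ← Real.rpow_mul h2]
        norm_num
    _ = ‖x ^ (2 ^ k)‖ ^ (((2:ℝ) ^ k)⁻¹) := by
        congr 1
        rw [pow_succ]
        field_simp

lemma g_antitone (x : E) : Antitone fun k => g k x :=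
  antitone_nat_of_succ_le fun k => g_succ_le k x

lemma g_tendsto (x : E) : Tendsto (fun k => g k x) atTop (𝓝 (rho x)) := by
  have h2 : Tendsto (fun k : ℕ => 2 ^ k) atTop atTop :=
    tendsto_pow_atTop_atTop_of_one_lt one_lt_two
  have := (rho_tendsto x).comp h2
  refine this.congr fun k => ?_
  simp only [Function.comp_apply, g, one_div]
  norm_num

lemma rho_le_g (k : ℕ) (x : E) : rho x ≤ g k x := by
  refine le_of_tendsto (g_tendsto x) ?_
  filter_upwards [eventually_ge_atTop k] with m hm
  exact g_antitone x hm

lemma rho_le_norm (x : E) : rho x ≤ ‖x‖ := by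
  simpa [g] using rho_le_g 0 x

lemma g_continuous (k : ℕ) : Continuous fun x : E => g k x := by
  have h1 : Continuous fun x : E => ‖x ^ (2 ^ k)‖ := (continuous_pow _).norm
  have h2 : Continuous fun t : ℝ => t ^ (((2:ℝ) ^ k)⁻¹) := by
    refine Real.continuous_rpow_const ?_
    positivity
  exact h2.comp h1

/-- upper semicontinuity of the spectral radius -/
lemma rho_usc (x : E) {ε : ℝ} (hε : 0 < ε) :
    ∃ δ > 0, ∀ w : E, ‖w‖ ≤ δ → rho (x + w) ≤ rho x + ε := by
  obtain ⟨k, hk⟩ : ∃ k, g k x < rho x + ε / 2 :=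
    ((g_tendsto x).eventually (Filter.Tendsto.eventually_lt_const (by linarith) tendsto_id
      )).exists
  have hc : ContinuousAt (fun y : E => g k y) x := (g_continuous k).continuousAt
  have : ∀ᶠ y in 𝓝 x, g k y < rho x + ε :=
    hc.eventually_lt continuousAt_const (by linarith)
  obtain ⟨δ, hδ, hball⟩ := Metric.eventually_nhds_iff_ball.mp this
  refine ⟨δ/2, half_pos hδ, fun w hw => ?_⟩
  have hmem : x + w ∈ ball x δ := by
    simp only [mem_ball, dist_self_add_left]
    exact lt_of_le_of_lt hw (by linarith)
  exact (rho_le_g k _).trans (hball _ hmem).le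


/-- Dini-type lemma: uniform choice of Gelfand index over a compact set. -/
lemma dini {K : Set ℂ} (hK : IsCompact K) (f : ℂ → E) (hf : Continuous f) {M ε : ℝ}
    (hb : ∀ l ∈ K, rho (f l) ≤ M) (hε : 0 < ε) :
    ∃ k, ∀ l ∈ K, g k (f l) ≤ M + ε := by
  set U : ℕ → Set ℂ := fun k => {l | g k (f l) < M + ε} with hU
  have hUopen : ∀ k, IsOpen (U k) :=
    fun k => isOpen_lt ((g_continuous k).comp hf) continuous_const
  have hUmono : Monotone U := by
    intro i j hij l hl
    exact lt_of_le_of_lt (g_antitone (f l) hij) hl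
  have hcov : K ⊆ ⋃ k, U k := by
    intro l hl
    have : ∀ᶠ k in atTop, g k (f l) < M + ε :=
      (g_tendsto (f l)).eventually_lt_const (lt_of_le_of_lt (hb l hl) (by linarith))
    obtain ⟨k, hk⟩ := this.exists
    exact mem_iUnion.2 ⟨k, hk⟩
  obtain ⟨t, ht⟩ := hK.elim_finite_subcover U hUopen hcov
  refine ⟨t.sup id, fun l hl => ?_⟩
  obtain ⟨k, hkt, hk⟩ := mem_iUnion₂.mp (ht hl)
  exact (hUmono (Finset.le_sup (f := id) hkt) hk).le


/-- Maximum modulus principle on a disk, at the center. -/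
lemma maxmod_ball (F : ℂ → E) (hF : Differentiable ℂ F) {s C : ℝ} (hs : 0 < s)
    (hC : ∀ l : ℂ, ‖l‖ = s → ‖F l‖ ≤ C) : ‖F 0‖ ≤ C := by
  refine Complex.norm_le_of_forall_mem_frontier_norm_le (U := ball (0:ℂ) s)
    isBounded_ball ⟨hF.differentiableOn, hF.continuous.continuousOn⟩ ?_ ?_
  · intro z hz
    rw [frontier_ball (0:ℂ) hs.ne'] at hz
    exact hC z (by simpa using hz)
  · exact subset_closure (mem_ball_self hs)

/-- Maximum modulus principle on an annulus with a monomial weight. -/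
lemma maxmod_annulus (F : ℂ → E) (hF : Differentiable ℂ F) {r₁ R C₁ C₃ : ℝ} (q : ℕ)
    (h0 : 0 < r₁) (h1 : r₁ < 1) (hR : 1 < R) (hC₁ : 0 ≤ C₁) (hC₃ : 0 ≤ C₃)
    (hb₁ : ∀ l : ℂ, ‖l‖ = r₁ → ‖F l‖ ≤ C₁) (hb₃ : ∀ l : ℂ, ‖l‖ = R → ‖F l‖ ≤ C₃) :
    ‖F 1‖ ≤ max (C₁ / r₁ ^ q) (C₃ / R ^ q) := by
  set G : ℂ → E := fun l => ((l⁻¹) ^ q) • F l with hG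
  set U : Set ℂ := {l : ℂ | r₁ < ‖l‖} ∩ {l : ℂ | ‖l‖ < R} with hUdef
  have hUopen : IsOpen U :=
    (isOpen_lt continuous_const continuous_norm).inter
      (isOpen_lt continuous_norm continuous_const)
  have hUsub : U ⊆ {l : ℂ | l ≠ 0} := by
    intro l hl
    have : r₁ < ‖l‖ := hl.1
    simp only [mem_setOf_eq]
    intro h
    rw [h] at this; simp at this; linarith
  have hclosub : closure U ⊆ {l : ℂ | r₁ ≤ ‖l‖} ∩ {l : ℂ | ‖l‖ ≤ R} := by
    refine closure_minimal ?_ (IsClosed.inter (isClosed_le continuous_const continuous_norm)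
      (isClosed_le continuous_norm continuous_const))
    rintro l ⟨hl1, hl2⟩
    simp only [mem_setOf_eq] at hl1 hl2 ⊢
    exact ⟨le_of_lt hl1, le_of_lt hl2⟩
  have hclo0 : closure U ⊆ {l : ℂ | l ≠ 0} := by
    intro l hl
    have := (hclosub hl).1
    simp only [mem_setOf_eq]
    intro h; rw [h] at this; simp at this; linarith
  have hGdiff : ∀ l : ℂ, l ≠ 0 → DifferentiableAt ℂ G l := by
    intro l hl
    exact ((differentiableAt_inv hl).pow q).smul (hF.differentiableAt)
  have hdc : DiffContOnCl ℂ G U := by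
    constructor
    · exact fun l hl => (hGdiff l (hUsub hl)).differentiableWithinAt
    · intro l hl
      exact ((hGdiff l (hclo0 hl)).continuousAt).continuousWithinAt
  have h1U : (1:ℂ) ∈ U := by
    constructor <;> simp [h1, hR]
  have key : ‖G 1‖ ≤ max (C₁ / r₁ ^ q) (C₃ / R ^ q) := by
    have hbd : Bornology.IsBounded U := by
      refine (isBounded_ball (x := (0:ℂ)) (r := R + 1)).subset ?_
      rintro l ⟨_, hl2⟩
      simp only [mem_ball, dist_zero_right]
      simp only [mem_setOf_eq] at hl2
      linarith
    refine Complex.norm_le_of_forall_mem_frontier_norm_le hbd hdc ?_ (subset_closure h1U)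
    · intro z hz
      have hzc : z ∈ closure U := frontier_subset_closure hz
      have hznU : z ∉ U := by
        rw [hUopen.frontier_eq] at hz
        exact hz.2
      have hz1 : r₁ ≤ ‖z‖ := (hclosub hzc).1
      have hz2 : ‖z‖ ≤ R := (hclosub hzc).2
      have hcases : ‖z‖ = r₁ ∨ ‖z‖ = R := by
        rcases lt_or_eq_of_le hz1 with h | h
        · rcases lt_or_eq_of_le hz2 with h' | h'
          · exact absurd ⟨h, h'⟩ hznU
          · exact Or.inr h'
        · exact Or.inl h.symm
      have hnorm : ‖G z‖ = (‖z‖⁻¹) ^ q * ‖F z‖ := by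
        rw [hG]
        simp [norm_smul, norm_pow]
      rcases hcases with h | h
      · refine le_trans ?_ (le_max_left _ _)
        rw [hnorm, h, div_eq_mul_inv, mul_comm (C₁) _, ← inv_pow]
        exact mul_le_mul_of_nonneg_left (hb₁ z h) (by positivity)
      · refine le_trans ?_ (le_max_right _ _)
        rw [hnorm, h, div_eq_mul_inv, mul_comm (C₃) _, ← inv_pow]
        exact mul_le_mul_of_nonneg_left (hb₃ z h) (by positivity)
  simpa [hG] using key


/-- pow-root extraction: `rho z ≤ (‖z ^ 2^k‖)^(2^k)⁻¹` rearrangements -/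
lemma norm_pow_le_of_g_le {z : E} {k : ℕ} {M : ℝ} (hM : 0 ≤ M) (h : g k z ≤ M) :
    ‖z ^ (2 ^ k)‖ ≤ M ^ (2 ^ k : ℕ) := by
  have h0 : (0:ℝ) < ((2:ℝ) ^ k)⁻¹ := by positivity
  have h3 := Real.rpow_le_rpow (Real.rpow_nonneg (norm_nonneg _) _) h
    (le_of_lt (by positivity : (0:ℝ) < ((2:ℝ)^k)))
  rw [← Real.rpow_mul (norm_nonneg _), inv_mul_cancel₀ (by positivity : ((2:ℝ)^k) ≠ 0),
    Real.rpow_one] at h3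
  calc ‖z ^ (2^k)‖ ≤ M ^ ((2:ℝ)^k : ℝ) := h3
  _ = M ^ (2^k : ℕ) := by
      rw [← Real.rpow_natCast M (2^k)]
      norm_num

/-- THE key analytic lemma. -/
lemma key_perturb {A B : Type*} [NormedRing A] [NormedAlgebra ℂ A] [CompleteSpace A]
    [NormedRing B] [NormedAlgebra ℂ B] [CompleteSpace B]
    (T : A →ₗ[ℂ] B) (hspec : ∀ a : A, spectralRadius ℂ (T a) = spectralRadius ℂ a)
    (a : ℕ → A) (c : A) (ha : Tendsto a atTop (𝓝 0))
    (hTa : Tendsto (fun n => T (a n)) atTop (𝓝 (T c)))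
    (x : A) : rho (x + c) ≤ rho x := by
  have rT : ∀ z : A, rho (T z) = rho z := fun z => congrArg ENNReal.toReal (hspec z)
  have main : ∀ ε : ℝ, 0 < ε → ε ≤ 1 → rho (x + c) ≤ rho x + 2 * ε := by
    intro ε hε hε1
    obtain ⟨δ, hδ, husc⟩ := rho_usc (T x) hε
    set M : ℝ := ‖T c‖ + 1 with hM
    have hM0 : 0 < M := by positivity
    set r₁ : ℝ := min (δ / (2 * M)) (1/2) with hr₁def
    have hr₁0 : 0 < r₁ := lt_min (by positivity) (by norm_num)
    have hr₁1 : r₁ < 1 := lt_of_le_of_lt (min_le_right _ _) (by norm_num)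
    have hr₁δ : r₁ * M ≤ δ / 2 := by
      have : r₁ ≤ δ / (2 * M) := min_le_left _ _
      calc r₁ * M ≤ (δ / (2 * M)) * M := by
            exact mul_le_mul_of_nonneg_right this hM0.le
      _ = δ / 2 := by field_simp
    set K : ℝ := ‖x + c‖ + 1 with hK
    have hK0 : 0 < K := by positivity
    -- the claim for each dyadic exponent
    have claim : ∀ j : ℕ, rho (x + c) ≤ (rho x + 2*ε) / r₁ ^ (((2:ℝ)^j)⁻¹ : ℝ) := by
      intro j
      set t : ℝ := ((2:ℝ)^j)⁻¹ with htdef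
      have ht0 : 0 < t := by positivity
      set R : ℝ := max 2 (((K+2)/ε) ^ (t⁻¹ : ℝ)) with hRdef
      have hR1 : 1 < R := lt_of_lt_of_le one_lt_two (le_max_left _ _)
      have hR0 : 0 < R := lt_trans one_pos hR1
      have hRt : (K+2)/ε ≤ R ^ t := by
        have h1 : ((K+2)/ε) ^ (t⁻¹ : ℝ) ≤ R := le_max_right _ _
        have h2 : (((K+2)/ε) ^ (t⁻¹ : ℝ)) ^ t ≤ R ^ t :=
          Real.rpow_le_rpow (Real.rpow_nonneg (by positivity) _) h1 ht0.le
        rwa [← Real.rpow_mul (by positivity : (0:ℝ) ≤ (K+2)/ε),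
          inv_mul_cancel₀ ht0.ne', Real.rpow_one] at h2
      -- choose n
      have hev : ∀ᶠ n in atTop, (‖a n‖ ≤ 1 ∧ ‖a n‖ * R ≤ 1) ∧
          (‖T (a n) - T c‖ ≤ δ/2 ∧ ‖T (a n)‖ ≤ ‖T c‖ + 1) := by
        have h1 : Tendsto (fun n => ‖a n‖) atTop (𝓝 0) := by
          simpa using ha.norm
        have h2 : Tendsto (fun n => ‖T (a n) - T c‖) atTop (𝓝 0) := by
          have h2' : Tendsto (fun n => T (a n) - T c) atTop (𝓝 (T c - T c)) :=
            hTa.sub (tendsto_const_nhds (α := ℕ) (f := atTop))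
          rw [sub_self] at h2'
          simpa using h2'.norm
        have h3 : Tendsto (fun n => ‖T (a n)‖) atTop (𝓝 ‖T c‖) := hTa.norm
        filter_upwards [h1.eventually_le_const (by norm_num : (0:ℝ) < 1),
          (h1.eventually_le_const (show (0:ℝ) < R⁻¹ by positivity)),
          h2.eventually_le_const (by positivity : (0:ℝ) < δ/2),
          h3.eventually_le_const (by linarith : ‖T c‖ < ‖T c‖ + 1)] with n e1 e2 e3 e4
        refine ⟨⟨e1, ?_⟩, e3, e4⟩
        calc ‖a n‖ * R ≤ R⁻¹ * R := mul_le_mul_of_nonneg_right e2 hR0.le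
        _ = 1 := inv_mul_cancel₀ hR0.ne'
      obtain ⟨n, ⟨han1, hanR⟩, hTgn, hTan⟩ := hev.exists
      set f : ℂ → A := fun l => (x + (c - a n)) + l • (a n) with hfdef
      have hfc : Continuous f := by
        exact continuous_const.add (continuous_id.smul continuous_const)
      have hfd : Differentiable ℂ f :=
        (differentiable_const _).add (differentiable_id.smul_const (a n))
      -- inner circle spectral bound
      have hinner : ∀ l ∈ sphere (0:ℂ) r₁, rho (f l) ≤ rho x + ε := by
        intro l hl
        have hlnorm : ‖l‖ = r₁ := by simpa using hl
        have hTf : T (f l) = T x + (T (c - a n) + l • T (a n)) := by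
          simp [hfdef, map_add, map_smul, add_assoc]
        have hwnorm : ‖T (c - a n) + l • T (a n)‖ ≤ δ := by
          calc ‖T (c - a n) + l • T (a n)‖ ≤ ‖T (c - a n)‖ + ‖l • T (a n)‖ := norm_add_le _ _
          _ ≤ δ/2 + r₁ * M := by
              gcongr
              · rw [map_sub]
                rw [← norm_sub_rev]
                exact hTgn
              · rw [norm_smul, hlnorm]
                exact mul_le_mul_of_nonneg_left (by simpa [hM] using hTan) hr₁0.le
          _ ≤ δ/2 + δ/2 := by linarith
          _ = δ := by ring
        calc rho (f l) = rho (T (f l)) := (rT _).symm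
        _ = rho (T x + (T (c - a n) + l • T (a n))) := by rw [hTf]
        _ ≤ rho (T x) + ε := husc _ hwnorm
        _ = rho x + ε := by rw [rT]
      -- outer circle norm bound
      have houter : ∀ l ∈ sphere (0:ℂ) R, rho (f l) ≤ K + 1 := by
        intro l hl
        have hlnorm : ‖l‖ = R := by simpa using hl
        calc rho (f l) ≤ ‖f l‖ := rho_le_norm _
        _ ≤ ‖x + (c - a n)‖ + ‖l • a n‖ := norm_add_le _ _
        _ ≤ (‖x + c‖ + ‖a n‖) + R * ‖a n‖ := by
            have e1 : ‖x + (c - a n)‖ ≤ ‖x + c‖ + ‖a n‖ := by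
              have heq : x + (c - a n) = (x + c) + (-(a n)) := by abel
              rw [heq]
              simpa using norm_add_le (x + c) (-(a n))
            have e2 : ‖l • a n‖ = R * ‖a n‖ := by rw [norm_smul, hlnorm]
            linarith [e1, le_of_eq e2]
        _ ≤ (‖x + c‖ + 1) + 1 := by
            have : R * ‖a n‖ ≤ 1 := by rwa [mul_comm]
            linarith
        _ = K + 1 := by rw [hK]
      -- Dini on both circles
      obtain ⟨k₁, hk₁⟩ := dini (isCompact_sphere (0:ℂ) r₁) f hfc hinner hε
      obtain ⟨k₂, hk₂⟩ := dini (isCompact_sphere (0:ℂ) R) f hfc houter hε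
      set k : ℕ := max (max k₁ k₂) j with hkdef
      have hkj : j ≤ k := le_max_right _ _
      set q : ℕ := 2 ^ (k - j) with hqdef
      set F : ℂ → A := fun l => (f l) ^ (2 ^ k) with hFdef
      have hFd : Differentiable ℂ F := hfd.pow _
      have hM₁0 : (0:ℝ) ≤ rho x + ε + ε := by
        have := rho_nonneg x; linarith
      have hM₃0 : (0:ℝ) ≤ K + 1 + ε := by linarith
      have hFb₁ : ∀ l : ℂ, ‖l‖ = r₁ → ‖F l‖ ≤ (rho x + ε + ε) ^ (2^k : ℕ) := by
        intro l hl
        refine norm_pow_le_of_g_le hM₁0 ?_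
        have h1 : g k₁ (f l) ≤ (rho x + ε) + ε := hk₁ l (by simpa using hl)
        have h2 : g k (f l) ≤ g k₁ (f l) := g_antitone (f l) (le_trans (le_max_left _ _) (le_max_left _ _))
        linarith
      have hFb₃ : ∀ l : ℂ, ‖l‖ = R → ‖F l‖ ≤ (K + 1 + ε) ^ (2^k : ℕ) := by
        intro l hl
        refine norm_pow_le_of_g_le hM₃0 ?_
        have h1 : g k₂ (f l) ≤ (K + 1) + ε := hk₂ l (by simpa using hl)
        have h2 : g k (f l) ≤ g k₂ (f l) := g_antitone (f l) (le_trans (le_max_right _ _) (le_max_left _ _))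
        linarith
      have hmax := maxmod_annulus F hFd q hr₁0 hr₁1 hR1 (by positivity) (by positivity) hFb₁ hFb₃
      have hF1 : F 1 = (x + c) ^ (2^k) := by
        simp only [hFdef, hfdef, one_smul]
        congr 1
        abel
      -- take 2^k-th roots
      have hroot : rho (x + c) ≤
          max ((rho x + ε + ε) / r₁ ^ t) ((K + 1 + ε) / R ^ t) := by
        have h1 : rho (x + c) ≤ ‖(x+c) ^ (2^k)‖ ^ (((2:ℝ)^k)⁻¹) := rho_le_g k _
        have h2 : ‖(x+c) ^ (2^k)‖ ^ (((2:ℝ)^k)⁻¹) ≤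
            (max ((rho x + ε + ε) ^ (2^k : ℕ) / r₁ ^ q) ((K + 1 + ε) ^ (2^k : ℕ) / R ^ q)) ^ (((2:ℝ)^k)⁻¹) := by
          refine Real.rpow_le_rpow (norm_nonneg _) ?_ (by positivity)
          rw [← hF1]
          exact hmax
        have hqt : (q : ℝ) * ((2:ℝ)^k)⁻¹ = t := by
          rw [hqdef, htdef]
          push_cast
          field_simp
          rw [← pow_add]
          congr 1
          omega

        have hsplit : ∀ (C base : ℝ), 0 ≤ C → 0 < base →
            (C ^ (2^k : ℕ) / base ^ q) ^ (((2:ℝ)^k)⁻¹) = C / base ^ t := by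
          intro C base hC hbase
          rw [Real.div_rpow (by positivity) (by positivity)]
          congr 1
          · rw [← Real.rpow_natCast C (2^k), ← Real.rpow_mul hC]
            have hone : ((2 ^ k : ℕ) : ℝ) * ((2:ℝ) ^ k)⁻¹ = 1 := by push_cast; field_simp
            rw [hone, Real.rpow_one]
          · rw [← Real.rpow_natCast base q, ← Real.rpow_mul hbase.le, hqt]
        have hmaxsplit : (max ((rho x + ε + ε) ^ (2^k : ℕ) / r₁ ^ q) ((K + 1 + ε) ^ (2^k : ℕ) / R ^ q)) ^ (((2:ℝ)^k)⁻¹) ≤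
            max (((rho x + ε + ε) ^ (2^k : ℕ) / r₁ ^ q) ^ (((2:ℝ)^k)⁻¹))
                (((K + 1 + ε) ^ (2^k : ℕ) / R ^ q) ^ (((2:ℝ)^k)⁻¹)) := by
          rcases max_cases ((rho x + ε + ε) ^ (2^k : ℕ) / r₁ ^ q) ((K + 1 + ε) ^ (2^k : ℕ) / R ^ q) with
            ⟨heq, _⟩ | ⟨heq, _⟩
          · rw [heq]; exact le_max_left _ _
          · rw [heq]; exact le_max_right _ _
        calc rho (x + c) ≤ _ := h1
        _ ≤ _ := h2
        _ ≤ _ := hmaxsplit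
        _ = max ((rho x + ε + ε) / r₁ ^ t) ((K + 1 + ε) / R ^ t) := by
            rw [hsplit _ _ hM₁0 hr₁0, hsplit _ _ hM₃0 hR0]
      -- the outer term is at most ε, and ε at most the inner term
      have hr₁t1 : r₁ ^ t ≤ 1 := Real.rpow_le_one hr₁0.le hr₁1.le ht0.le
      have hr₁tpos : 0 < r₁ ^ t := Real.rpow_pos_of_pos hr₁0 t
      have hRtpos : (0:ℝ) < R ^ t := Real.rpow_pos_of_pos hR0 t
      have houterε : (K + 1 + ε) / R ^ t ≤ ε := by
        rw [div_le_iff₀ hRtpos]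
        have h1 : (K + 2)/ε ≤ R ^ t := hRt
        have h2 : K + 2 ≤ ε * R ^ t := by
          rw [div_le_iff₀ hε] at h1
          linarith [h1]
        linarith
      have hinnerε : ε ≤ (rho x + ε + ε) / r₁ ^ t := by
        rw [le_div_iff₀ hr₁tpos]
        have h1 : ε * r₁ ^ t ≤ ε * 1 := by
          exact mul_le_mul_of_nonneg_left hr₁t1 hε.le
        have := rho_nonneg x
        linarith
      calc rho (x + c) ≤ max ((rho x + ε + ε) / r₁ ^ t) ((K + 1 + ε) / R ^ t) := hroot
      _ ≤ (rho x + ε + ε) / r₁ ^ t := by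
          rw [max_le_iff]
          exact ⟨le_refl _, le_trans houterε hinnerε⟩
      _ = (rho x + 2*ε) / r₁ ^ (((2:ℝ)^j)⁻¹ : ℝ) := by rw [htdef]; ring_nf
    -- now take the limit j → ∞
    have htj : Tendsto (fun j : ℕ => (((2:ℝ)^j)⁻¹ : ℝ)) atTop (𝓝 0) :=
      tendsto_inv_atTop_zero.comp (tendsto_pow_atTop_atTop_of_one_lt one_lt_two)
    have hr₁0 : (0:ℝ) < min (δ / (2 * M)) (1/2) := lt_min (by positivity) (by norm_num)
    have hrpow : Tendsto (fun s : ℝ => (min (δ / (2 * M)) (1/2)) ^ s) (𝓝 0) (𝓝 1) := by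
      have heq : ∀ s : ℝ, (min (δ / (2 * M)) (1/2)) ^ s =
          Real.exp (Real.log (min (δ / (2 * M)) (1/2)) * s) := fun s =>
        Real.rpow_def_of_pos hr₁0 s
      have hexp : Tendsto (fun s : ℝ => Real.exp (Real.log (min (δ / (2 * M)) (1/2)) * s))
          (𝓝 0) (𝓝 1) := by
        exact (Real.continuous_exp.tendsto' 0 1 (by simp)).comp
          ((continuous_const.mul continuous_id).tendsto' 0 0 (by simp))
      exact hexp.congr fun s => (heq s).symm
    have hlim : Tendsto (fun j : ℕ => (rho x + 2*ε) / (min (δ / (2 * M)) (1/2)) ^ (((2:ℝ)^j)⁻¹ : ℝ))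
        atTop (𝓝 ((rho x + 2*ε) / 1)) :=
      tendsto_const_nhds.div (hrpow.comp htj) one_ne_zero
    have := ge_of_tendsto' hlim (fun j => claim j)
    rwa [div_one] at this
  -- conclude from the ε-version
  refine le_of_forall_pos_le_add (fun ε' hε' => ?_)
  have h := main (min (ε'/2) 1) (lt_min (by linarith) one_pos) (min_le_right _ _)
  have : 2 * min (ε'/2) 1 ≤ ε' := by
    rcases min_cases (ε'/2) 1 with ⟨heq, _⟩ | ⟨heq, hle⟩
    · rw [heq]; linarith
    · rw [heq]; linarith
  linarith


lemma g_le_of_norm_pow_le {z : E} {k : ℕ} {M : ℝ} (hM : 0 ≤ M)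
    (h : ‖z ^ (2 ^ k)‖ ≤ M ^ (2 ^ k : ℕ)) : g k z ≤ M := by
  have h1 : (0:ℝ) < ((2:ℝ)^k)⁻¹ := by positivity
  have h2 := Real.rpow_le_rpow (norm_nonneg _) h h1.le
  refine le_trans h2 ?_
  rw [← Real.rpow_natCast M (2^k), ← Real.rpow_mul hM]
  have hone : ((2 ^ k : ℕ) : ℝ) * ((2:ℝ) ^ k)⁻¹ = 1 := by push_cast; field_simp
  rw [hone, Real.rpow_one]

/-- Z1 : on a large circle, `(y + l)·c` is quasinilpotent. -/
lemma Z1 {c : E} (hC : ∀ x : E, rho (x + c) ≤ rho x) (y : E) (l : ℂ)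
    (hl : 2 * ‖y‖ + 1 ≤ ‖l‖) : rho ((y + l • (1:E)) * c) = 0 := by
  set s : ℝ := ‖l‖ with hs
  have hy0 : (0:ℝ) ≤ ‖y‖ := norm_nonneg _
  have hs0 : 0 < s := by rw [hs]; linarith
  have hsy : 0 < s - ‖y‖ := by rw [hs]; linarith
  have hl0 : l ≠ 0 := by
    rw [← norm_pos_iff]
    exact hs ▸ hs0
  set u : E := y + l • (1:E) with hu
  have hualg : u = algebraMap ℂ E l + y := by
    rw [hu, Algebra.algebraMap_eq_smul_one]; abel
  have hspec_u : ∀ z ∈ spectrum ℂ u, ‖z - l‖ ≤ ‖y‖ := by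
    intro z hz
    rw [hualg, ← spectrum.singleton_add_eq] at hz
    obtain ⟨z₁, hz₁, z₂, hz₂, rfl⟩ := Set.mem_add.mp hz
    rw [Set.mem_singleton_iff] at hz₁
    subst hz₁
    simpa using (norm_le_rho_of_mem hz₂).trans (rho_le_norm y)
  have hunit : IsUnit u := by
    rw [← spectrum.zero_notMem_iff ℂ]
    intro h0
    have := hspec_u 0 h0
    simp only [zero_sub, norm_neg] at this
    rw [← hs] at this
    linarith
  have hsub : ∀ μ ∈ spectrum ℂ (u * c), μ = 0 := by
    intro μ hμ
    by_contra hμ0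
    have hμn : (0:ℝ) < ‖μ‖ := norm_pos_iff.mpr hμ0
    have hswap : μ ∈ spectrum ℂ (c * u) := by
      have hset := spectrum.nonzero_mul_comm (𝕜 := ℂ) u c
      have hmem : μ ∈ spectrum ℂ (u * c) \ {0} := ⟨hμ, by simpa using hμ0⟩
      rw [hset] at hmem
      exact hmem.1
    set w : E := ((hunit.unit⁻¹ : Eˣ) : E) with hw
    have hwu : w * u = 1 := by
      rw [hw]
      nth_rewrite 2 [← hunit.unit_spec]
      exact hunit.unit.inv_mul
    have hsing : ¬ IsUnit (c - μ • w) := by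
      intro hun
      have hprod : (c - μ • w) * u = c * u - algebraMap ℂ E μ := by
        rw [sub_mul, smul_mul_assoc, hwu, Algebra.algebraMap_eq_smul_one]
      have h1 : IsUnit (c * u - algebraMap ℂ E μ) := hprod ▸ hun.mul hunit
      have hneg : IsUnit (algebraMap ℂ E μ - c * u) := by
        rw [← neg_sub]; exact h1.neg
      exact (spectrum.mem_iff.mp hswap) hneg
    have hmem0 : (0:ℂ) ∈ spectrum ℂ ((-(μ • w)) + c) := by
      rw [spectrum.zero_mem_iff]
      intro h
      apply hsing
      have heq : -(μ • w) + c = c - μ • w := by abel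
      rwa [heq] at h
    -- spectrum of w lies near l⁻¹
    set η : ℝ := ‖y‖ / ((s - ‖y‖) * s) with hη
    have hη0 : 0 ≤ η := by positivity
    have hspec_w : ∀ ζ ∈ spectrum ℂ w, ‖ζ - l⁻¹‖ ≤ η := by
      intro ζ hζ
      have hζ0 : ζ ≠ 0 := by
        intro h
        rw [h] at hζ
        exact (Units.zero_notMem_spectrum (R := ℂ) hunit.unit⁻¹) (by rwa [← hw])
      have hζinv : ζ⁻¹ ∈ spectrum ℂ u := by
        have h1 : ((Units.mk0 ζ hζ0 : ℂˣ) : ℂ) ∈ spectrum ℂ ((hunit.unit⁻¹ : Eˣ) : E) := by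
          rwa [← hw]
        have h2 := spectrum.inv_mem_iff.mp h1
        simpa [hunit.unit_spec] using h2
      have hz := hspec_u _ hζinv
      have hzl : s - ‖y‖ ≤ ‖ζ⁻¹‖ := by
        have habs : ‖l‖ - ‖ζ⁻¹‖ ≤ ‖ζ⁻¹ - l‖ := by
          have h3 := norm_sub_norm_le l (ζ⁻¹)
          rwa [norm_sub_rev] at h3
        rw [← hs] at habs
        linarith
      have hzpos : (0:ℝ) < ‖ζ⁻¹‖ := by linarith
      have hdiff : ζ - l⁻¹ = ζ * l⁻¹ * (l - ζ⁻¹) := by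
        field_simp
      have hz' : ‖l - ζ⁻¹‖ ≤ ‖y‖ := by rw [norm_sub_rev]; exact hz
      rw [hdiff, norm_mul, norm_mul, norm_inv, ← hs]
      have hζnorm : ‖ζ‖ = ‖ζ⁻¹‖⁻¹ := by
        rw [norm_inv, inv_inv]
      rw [hζnorm]
      have f1 : ‖ζ⁻¹‖⁻¹ ≤ (s - ‖y‖)⁻¹ := by
        exact inv_anti₀ hsy hzl
      calc ‖ζ⁻¹‖⁻¹ * s⁻¹ * ‖l - ζ⁻¹‖ ≤ (s - ‖y‖)⁻¹ * s⁻¹ * ‖y‖ := by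
            refine mul_le_mul ?_ hz' (norm_nonneg _) (by positivity)
            exact mul_le_mul_of_nonneg_right f1 (by positivity)
      _ = η := by rw [hη]; field_simp
    -- spectrum of x₀ - α
    set α : ℂ := -(2 * μ / l) with hα
    set x₀ : E := -(μ • w) with hx₀
    have hspec_x₀ : ∀ ξ ∈ spectrum ℂ (x₀ - algebraMap ℂ E α), ‖ξ‖ ≤ ‖μ‖ * η + ‖μ‖ / s := by
      intro ξ hξ
      rw [← spectrum.sub_singleton_eq] at hξ
      obtain ⟨ξ₁, hξ₁, ξ₂, hξ₂, rfl⟩ := Set.mem_sub.mp hξ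
      rw [Set.mem_singleton_iff] at hξ₂
      subst hξ₂
      have hx₀smul : x₀ = (Units.mk0 (-μ) (neg_ne_zero.mpr hμ0)) • w := by
        rw [hx₀, Units.smul_def]
        simp [neg_smul]
      rw [hx₀smul, spectrum.unit_smul_eq_smul] at hξ₁
      obtain ⟨ζ, hζ, rfl⟩ := hξ₁
      simp only [Units.smul_def, Units.val_mk0]
      have hval : -μ • ζ - α = -μ * ((ζ - l⁻¹) - l⁻¹) := by
        rw [smul_eq_mul, hα]
        field_simp
        ring
      rw [hval, norm_mul, norm_neg]
      calc ‖μ‖ * ‖ζ - l⁻¹ - l⁻¹‖ ≤ ‖μ‖ * (η + s⁻¹) := by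
            refine mul_le_mul_of_nonneg_left ?_ hμn.le
            refine (norm_sub_le _ _).trans ?_
            gcongr
            · exact hspec_w ζ hζ
            · rw [norm_inv, ← hs]
      _ = ‖μ‖ * η + ‖μ‖ / s := by ring
    have hαrho : ‖α‖ ≤ rho (x₀ - algebraMap ℂ E α) := by
      have h1 : (0:ℂ) - α ∈ spectrum ℂ (((-(μ • w)) + c) - algebraMap ℂ E α) := by
        rw [← spectrum.sub_singleton_eq]
        exact Set.sub_mem_sub hmem0 rfl
      have h2 : ((-(μ • w)) + c) - algebraMap ℂ E α = (x₀ - algebraMap ℂ E α) + c := by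
        rw [hx₀]; abel
      rw [h2] at h1
      have h3 := norm_le_rho_of_mem h1
      simp only [zero_sub, norm_neg] at h3
      exact h3.trans (hC _)
    have hαnorm : ‖α‖ = 2 * ‖μ‖ / s := by
      rw [hα, norm_neg, norm_div, norm_mul, ← hs]
      norm_num
    have hrhobound : rho (x₀ - algebraMap ℂ E α) ≤ ‖μ‖ * η + ‖μ‖ / s :=
      rho_le_of_subset hspec_x₀ (by positivity)
    have hfinal : 2 * ‖μ‖ / s ≤ ‖μ‖ * η + ‖μ‖ / s := by
      rw [← hαnorm]
      exact hαrho.trans hrhobound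
    -- derive contradiction
    rw [mul_div_assoc] at hfinal
    have h5 : ‖μ‖ / s ≤ ‖μ‖ * η := by linarith
    have h5' : ‖μ‖ * (1/s) ≤ ‖μ‖ * η := by rw [mul_one_div]; exact h5
    have h6 : (1:ℝ) / s ≤ η := (mul_le_mul_iff_right₀ hμn).mp h5'
    rw [hη, div_le_div_iff₀ hs0 (by positivity)] at h6
    have h7 : s - ‖y‖ ≤ ‖y‖ := by nlinarith
    linarith
  refine le_antisymm (rho_le_of_subset (fun μ hμ => ?_) le_rfl) (rho_nonneg _)
  rw [hsub μ hμ]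
  simp

/-- Z2 : `rho (y * c) = 0`. -/
lemma rho_mul_eq_zero {c : E} (hC : ∀ x : E, rho (x + c) ≤ rho x) (y : E) :
    rho (y * c) = 0 := by
  set s : ℝ := 2 * ‖y‖ + 1 with hs
  have hs0 : 0 < s := by positivity
  set f : ℂ → E := fun l => (y + l • (1:E)) * c with hf
  have hcont : Continuous f :=
    (continuous_const.add (continuous_id.smul continuous_const)).mul continuous_const
  have hdiff : Differentiable ℂ f :=
    ((differentiable_const _).add (differentiable_id.smul_const (1:E))).mul
      (differentiable_const c)
  have hcirc : ∀ l ∈ sphere (0:ℂ) s, rho (f l) ≤ 0 := by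
    intro l hl
    have hlnorm : ‖l‖ = s := by simpa using hl
    rw [hf]
    exact (Z1 hC y l (by rw [hlnorm, hs])).le
  refine le_antisymm ?_ (rho_nonneg _)
  refine le_of_forall_pos_le_add (fun ε hε => ?_)
  obtain ⟨k, hk⟩ := dini (isCompact_sphere (0:ℂ) s) f hcont hcirc hε
  have hF : ∀ l : ℂ, ‖l‖ = s → ‖(f l) ^ (2^k)‖ ≤ (0 + ε) ^ (2^k : ℕ) := by
    intro l hl
    exact norm_pow_le_of_g_le (by linarith) (hk l (by simpa using hl))
  have hF0 : f 0 = y * c := by rw [hf]; simp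
  have h0 : ‖(y * c) ^ (2^k)‖ ≤ (0 + ε) ^ (2^k : ℕ) := by
    have h0' := maxmod_ball (fun l => (f l) ^ (2^k)) (hdiff.pow _) hs0 hF
    simpa [hF0] using h0'
  have := g_le_of_norm_pow_le (M := 0 + ε) (by linarith) h0
  calc rho (y * c) ≤ g k (y * c) := rho_le_g k _
  _ ≤ 0 + ε := this


end SpecIso

open Filter Metric Set
open scoped Topology ENNReal NNReal

/-- A surjective linear spectral isometry from a unital semisimple complex Banach algebra
onto a unital complex Banach algebra is automatically continuous. -/
theorem spectral_isometry_continuous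
    {A B : Type*} [NormedRing A] [NormedAlgebra ℂ A] [CompleteSpace A]
    [NormedRing B] [NormedAlgebra ℂ B] [CompleteSpace B]
    (hA : jacobsonRadical A = ⊥)
    (T : A →ₗ[ℂ] B) (hsurj : Function.Surjective T)
    (hspec : ∀ a : A, spectralRadius ℂ (T a) = spectralRadius ℂ a) :
    Continuous T := by
  open Filter Topology in
  refine T.continuous_of_seq_closed_graph (fun u x y hu hTu => ?_)
  obtain ⟨c, hc⟩ := hsurj (y - T x)
  set a : ℕ → A := fun n => u n - x with ha_def
  have ha : Filter.Tendsto a Filter.atTop (nhds 0) := by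
    have h1 := hu.sub (tendsto_const_nhds (x := x))
    simpa [ha_def, sub_self] using h1
  have hTa : Filter.Tendsto (fun n => T (a n)) Filter.atTop (nhds (T c)) := by
    rw [hc]
    have h1 := hTu.sub (tendsto_const_nhds (x := T x))
    refine h1.congr fun n => ?_
    simp [ha_def, map_sub]
  have hC : ∀ z : A, SpecIso.rho (z + c) ≤ SpecIso.rho z :=
    SpecIso.key_perturb T hspec a c ha hTa
  have hz : ∀ y' : A, SpecIso.rho (y' * c) = 0 := SpecIso.rho_mul_eq_zero hC
  have hrad : c ∈ jacobsonRadical A := by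
    rw [jacobsonRadical, TwoSidedIdeal.mem_jacobson_iff]
    intro v
    have hunit : IsUnit ((1:A) + v * c) := by
      have h1 : (-1 : ℂ) ∉ spectrum ℂ (v * c) := by
        intro hmem
        have h2 := SpecIso.norm_le_rho_of_mem hmem
        rw [hz] at h2
        norm_num at h2
      have h2 := spectrum.notMem_iff.mp h1
      have h3 : (1 : A) + v * c = -(algebraMap ℂ A (-1) - v * c) := by
        simp [add_comm]
      rw [h3]
      exact h2.neg
    refine ⟨((hunit.unit⁻¹ : Aˣ) : A), ?_⟩
    rw [TwoSidedIdeal.mem_bot]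
    have hinv : ((hunit.unit⁻¹ : Aˣ) : A) * ((1:A) + v * c) = 1 := by
      nth_rewrite 2 [← hunit.unit_spec]
      exact hunit.unit.inv_mul
    have h4 : ((hunit.unit⁻¹ : Aˣ) : A) * v * c + ((hunit.unit⁻¹ : Aˣ) : A) - 1
        = ((hunit.unit⁻¹ : Aˣ) : A) * ((1:A) + v * c) - 1 := by noncomm_ring
    rw [h4, hinv, sub_self]
  rw [hA, TwoSidedIdeal.mem_bot] at hrad
  rw [hrad, map_zero] at hc
  have := hc.symm
  rw [sub_eq_zero] at this
  exact this
end
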